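/- arXiv:math/0610329 — 3 statements merged into one kernel-verified Lean document; each statement's English description precedes it below -/
import Mathlib

section
/- (Abel-summation bound for the fast component). Let b ∈ (1/2, 1), β₀ > 0, β_n = β₀ n^{-b} and u_n = Σ_{k=1}^n β_k. If (θ_n) is an ℝ^d-valued random sequence with ‖θ_n‖ = O(√(β_n log u_n)) almost surely, then almost surely (1/√n) ‖Σ_{k=1}^n β_k^{-1}(θ_{k+1} - θ_k)‖ = O(n^{(b-1)/2} log n); in particular (1/√n) Σ_{k=1}^n β_k^{-1}(θ_{k+1} - θ_k) → 0 almost surely. -/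
open MeasureTheory Filter Asymptotics Matrix

/-- Action of a real `p × q` matrix on a Euclidean vector. -/
noncomputable def mv {p q : ℕ} (A : Matrix (Fin p) (Fin q) ℝ)
    (x : EuclideanSpace ℝ (Fin q)) : EuclideanSpace ℝ (Fin p) :=
  WithLp.toLp 2 (fun i => ∑ j, A i j * x j)

/-- The matrix exponential of a real square matrix. -/
noncomputable def expm {p : ℕ} (A : Matrix (Fin p) (Fin p) ℝ) : Matrix (Fin p) (Fin p) ℝ :=
  NormedSpace.exp A

/-- `Lam A = -max { Re lam | lam ∈ Sp(A) }`, the negative spectral abscissa of a real matrix,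
where the spectrum is taken over `ℂ`. -/
noncomputable def Lam {p : ℕ} (A : Matrix (Fin p) (Fin p) ℝ) : ℝ :=
  - sSup (Complex.re '' spectrum ℂ (A.map (Complex.ofReal ·)))

open Classical in
/-- The indicator `𝟙_{b = 1}`. -/
noncomputable def ind1 (b : ℝ) : ℝ := if b = 1 then 1 else 0

/-- A function is slowly varying at infinity if `L (c x) / L x → 1` for every `c > 0`. -/
def SlowlyVarying (L : ℝ → ℝ) : Prop :=
  ∀ c : ℝ, 0 < c → Tendsto (fun x => L (c * x) / L x) atTop (nhds 1)

open Classical in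
/-- Condition (C) for a sequence `(w n)`, relative to the exponent `b` and the step sizes `β`:
`w` is positive and bounded and, if `b = 1`, `w n = n ^ (-ω) * L n` for some `ω ≥ 0` and some
nondecreasing slowly varying `L`, while if `b < 1`, `w n / w (n+1) = 1 + o (β n)`. -/
def ConditionC (b : ℝ) (β w : ℕ → ℝ) : Prop :=
  (∀ n, 0 < w n) ∧ BddAbove (Set.range w) ∧
    (if b = 1 then
      ∃ ω : ℝ, 0 ≤ ω ∧ ∃ L : ℝ → ℝ, Monotone L ∧ SlowlyVarying L ∧
        ∀ n : ℕ, 1 ≤ n → w n = (n : ℝ) ^ (-ω) * L n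
    else
      (fun n : ℕ => w n / w (n + 1) - 1) =o[atTop] β)

/-- Condition (C') for a sequence `(w n)`, relative to the step sizes `γ`:
`w` is positive and bounded and `w n / w (n+1) = 1 + o (γ n)`. -/
def ConditionC' (γ w : ℕ → ℝ) : Prop :=
  (∀ n, 0 < w n) ∧ BddAbove (Set.range w) ∧
    (fun n : ℕ => w n / w (n + 1) - 1) =o[atTop] γ

/-- The operator norm of a real matrix, induced by the Euclidean vector norms. -/
noncomputable def opn {p q : ℕ} (A : Matrix (Fin p) (Fin q) ℝ) : ℝ :=
  sSup ((fun x : EuclideanSpace ℝ (Fin q) => ‖mv A x‖) '' {x | ‖x‖ ≤ 1})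

set_option maxHeartbeats 1000000 in
private lemma rpow_sub_bounds {c : ℝ} (hc0 : 0 < c) (hc1 : c < 1) {x : ℝ} (hx : 2 ≤ x) :
    c * x ^ (c - 1) ≤ x ^ c - (x - 1) ^ c ∧ x ^ c - (x - 1) ^ c ≤ c * (x - 1) ^ (c - 1) := by
  have h1 : (1:ℝ) ≤ x - 1 := by linarith
  have hlt : x - 1 < x := by linarith
  obtain ⟨ξ, hξ, hslope⟩ := exists_hasDerivAt_eq_slope (fun y : ℝ => y ^ c)
    (fun y : ℝ => c * y ^ (c - 1)) hlt
    (fun y _ => (Real.continuousAt_rpow_const y c (Or.inr hc0.le)).continuousWithinAt)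
    (fun y hy => Real.hasDerivAt_rpow_const (Or.inl (by have := hy.1; linarith : y ≠ 0)))
  have hden : x - (x - 1) = 1 := by ring
  rw [hden, div_one] at hslope
  have hξ0 : 0 < ξ := by have := hξ.1; linarith
  have hle1 : x ^ (c - 1) ≤ ξ ^ (c - 1) :=
    Real.rpow_le_rpow_of_nonpos hξ0 hξ.2.le (by linarith)
  have hle2 : ξ ^ (c - 1) ≤ (x - 1) ^ (c - 1) :=
    Real.rpow_le_rpow_of_nonpos (by linarith) hξ.1.le (by linarith)
  constructor
  · calc c * x ^ (c - 1) ≤ c * ξ ^ (c - 1) := by nlinarith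
    _ = x ^ c - (x - 1) ^ c := hslope
  · calc x ^ c - (x - 1) ^ c = c * ξ ^ (c - 1) := hslope.symm
    _ ≤ c * (x - 1) ^ (c - 1) := by nlinarith

private lemma abel_identity {E : Type*} [AddCommGroup E] [Module ℝ E]
    (a : ℕ → ℝ) (v : ℕ → E) :
    ∀ n : ℕ, 1 ≤ n →
      ∑ k ∈ Finset.Icc 1 n, a k • (v (k+1) - v k)
        = a n • v (n+1) - a 1 • v 1 - ∑ k ∈ Finset.Icc 2 n, (a k - a (k-1)) • v k := by
  intro n hn
  induction n, hn using Nat.le_induction with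
  | base => simp [Finset.Icc_eq_empty (by omega : ¬ (2:ℕ) ≤ 1), smul_sub]
  | succ n hn ih =>
    rw [Finset.sum_Icc_succ_top (by omega), ih, Finset.sum_Icc_succ_top (by omega)]
    have : (n + 1 : ℕ) - 1 = n := by omega
    rw [this, smul_sub, sub_smul]
    abel

private lemma telescope_Ioc (g : ℕ → ℝ) {m : ℕ} :
    ∀ n : ℕ, m ≤ n → ∑ k ∈ Finset.Ioc m n, (g k - g (k-1)) = g n - g m := by
  intro n hn
  induction n, hn using Nat.le_induction with
  | base => simp
  | succ n hn ih =>
    rw [Finset.sum_Ioc_succ_top (by omega), ih]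
    have : (n + 1 : ℕ) - 1 = n := by omega
    rw [this]; ring


set_option maxHeartbeats 2000000 in
/-- **Abel-summation bound for the fast component**: if `‖θ_n‖ = O(√(β_n log u_n))` a.s. with
`β_n = β₀ n^{-b}`, `b ∈ (1/2,1)`, then a.s.
`n^{-1/2} ‖Σ_{k≤n} β_k⁻¹ (θ_{k+1} - θ_k)‖ = O(n^{(b-1)/2} log n)`, and in particular
`n^{-1/2} Σ_{k≤n} β_k⁻¹ (θ_{k+1} - θ_k) → 0` a.s. -/
theorem abel_fast_component
    {d : ℕ} {Ω : Type} [mΩ : MeasurableSpace Ω] (P : Measure Ω) [IsProbabilityMeasure P]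
    {b β₀ : ℝ} (hb1 : 1/2 < b) (hb2 : b < 1) (hβ₀ : 0 < β₀)
    (β u : ℕ → ℝ)
    (hβ : ∀ n : ℕ, β n = β₀ * (n : ℝ) ^ (-b))
    (hu : ∀ n, u n = ∑ k ∈ Finset.Icc 1 n, β k)
    (θ : ℕ → Ω → EuclideanSpace ℝ (Fin d))
    (hθ : ∀ᵐ ω ∂P, (fun n : ℕ => ‖θ n ω‖) =O[atTop] fun n : ℕ => Real.sqrt (β n * Real.log (u n))) :
    ∀ᵐ ω ∂P,
      ((fun n : ℕ => (Real.sqrt (n : ℝ))⁻¹ * ‖∑ k ∈ Finset.Icc 1 n, (β k)⁻¹ • (θ (k+1) ω - θ k ω)‖)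
        =O[atTop] fun n : ℕ => (n : ℝ) ^ ((b - 1)/2) * Real.log (n : ℝ)) ∧
      Tendsto (fun n : ℕ => (Real.sqrt (n : ℝ))⁻¹ •
          ∑ k ∈ Finset.Icc 1 n, (β k)⁻¹ • (θ (k+1) ω - θ k ω))
        atTop (nhds 0) := by
  have hb0 : 0 < b := by linarith
  have hβnonneg : ∀ k : ℕ, 0 ≤ β k := by
    intro k; rw [hβ]; positivity
  have haeq : ∀ k : ℕ, (β k)⁻¹ = β₀⁻¹ * (k:ℝ) ^ b := by
    intro k
    rw [hβ k, Real.rpow_neg (Nat.cast_nonneg k), mul_inv, inv_inv]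
  filter_upwards [hθ] with ω hω
  rw [isBigO_iff] at hω
  obtain ⟨C, hC⟩ := hω
  rw [eventually_atTop] at hC
  obtain ⟨N₀, hN₀⟩ := hC
  set C' : ℝ := max C 1 with hC'def
  have hC'0 : 0 ≤ C' := le_trans zero_le_one (le_max_right _ _)
  set C₁ : ℝ := 1 + |Real.log β₀| with hC₁def
  have hC₁0 : 0 < C₁ := by positivity
  set C₃ : ℝ := Real.sqrt (β₀ * C₁) with hC₃def
  have hC₃0 : 0 ≤ C₃ := Real.sqrt_nonneg _
  set C₂ : ℝ := C' * C₃ with hC₂def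
  have hC₂0 : 0 ≤ C₂ := mul_nonneg hC'0 hC₃0
  set N₁ : ℕ := max N₀ 3 with hN₁def
  have hN₁3 : 3 ≤ N₁ := le_max_right _ _
  -- pointwise bound on ‖θ k ω‖
  have hθbd : ∀ k : ℕ, N₁ ≤ k → ‖θ k ω‖ ≤ C₂ * (k:ℝ) ^ (-(b/2)) * Real.log k := by
    intro k hk
    have hk3 : 3 ≤ k := le_trans hN₁3 hk
    have hk3' : (3:ℝ) ≤ (k:ℝ) := by exact_mod_cast hk3
    have hk0 : (0:ℝ) < (k:ℝ) := by linarith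
    have hlogk : 1 ≤ Real.log k := by
      rw [Real.le_log_iff_exp_le hk0]
      have := Real.exp_one_lt_d9
      linarith
    have hupos : 0 < u k := by
      rw [hu]
      apply Finset.sum_pos'
      · intro i _; exact hβnonneg i
      · refine ⟨1, Finset.mem_Icc.2 ⟨le_refl 1, by omega⟩, ?_⟩
        rw [hβ]
        norm_num
        exact hβ₀
    have hule : u k ≤ β₀ * k := by
      rw [hu]
      calc ∑ j ∈ Finset.Icc 1 k, β j ≤ ∑ j ∈ Finset.Icc 1 k, β₀ := by
            apply Finset.sum_le_sum
            intro j hj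
            have hj1 : 1 ≤ j := (Finset.mem_Icc.1 hj).1
            have hj1' : (1:ℝ) ≤ (j:ℝ) := by exact_mod_cast hj1
            rw [hβ]
            have : (j:ℝ) ^ (-b) ≤ 1 :=
              Real.rpow_le_one_of_one_le_of_nonpos hj1' (by linarith)
            nlinarith
        _ = (k:ℝ) * β₀ := by
            rw [Finset.sum_const, Nat.card_Icc]
            simp [nsmul_eq_mul]
        _ = β₀ * (k:ℝ) := mul_comm _ _
    have hlogu : Real.log (u k) ≤ C₁ * Real.log k := by
      calc Real.log (u k) ≤ Real.log (β₀ * k) := Real.log_le_log hupos hule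
        _ = Real.log β₀ + Real.log k := Real.log_mul (ne_of_gt hβ₀) (by positivity)
        _ ≤ C₁ * Real.log k := by
            have h1 : Real.log β₀ ≤ |Real.log β₀| := le_abs_self _
            rw [hC₁def]; nlinarith [abs_nonneg (Real.log β₀)]
    have hA2 : ((k:ℝ) ^ (-(b/2)))^2 = (k:ℝ) ^ (-b) := by
      rw [← Real.rpow_natCast ((k:ℝ) ^ (-(b/2))) 2, ← Real.rpow_mul hk0.le]
      norm_num
    have hC₃sq : C₃^2 = β₀ * C₁ := Real.sq_sqrt (by positivity)
    have hr : (0:ℝ) ≤ (k:ℝ) ^ (-b) := Real.rpow_nonneg hk0.le _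
    have hll : Real.log k ≤ (Real.log k)^2 := by nlinarith
    have hkey : β k * Real.log (u k) ≤ (C₃ * (k:ℝ) ^ (-(b/2)) * Real.log k)^2 := by
      have e1 : (C₃ * (k:ℝ) ^ (-(b/2)) * Real.log k)^2
          = (β₀ * C₁) * ((k:ℝ) ^ (-b) * (Real.log k)^2) := by
        rw [mul_pow, mul_pow, hC₃sq, hA2]; ring
      rw [e1, hβ]
      have s1 := mul_le_mul_of_nonneg_left hlogu (mul_nonneg hβ₀.le hr)
      have s2 := mul_le_mul_of_nonneg_left hll (mul_nonneg (mul_nonneg hβ₀.le hC₁0.le) hr)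
      nlinarith
    have hbound : Real.sqrt (β k * Real.log (u k)) ≤ C₃ * (k:ℝ) ^ (-(b/2)) * Real.log k := by
      have hrhs0 : 0 ≤ C₃ * (k:ℝ) ^ (-(b/2)) * Real.log k :=
        mul_nonneg (mul_nonneg hC₃0 (Real.rpow_nonneg hk0.le _)) (by linarith)
      calc Real.sqrt (β k * Real.log (u k)) ≤ Real.sqrt ((C₃ * (k:ℝ) ^ (-(b/2)) * Real.log k)^2) :=
            Real.sqrt_le_sqrt hkey
        _ = _ := Real.sqrt_sq hrhs0
    have hbd := hN₀ k (le_trans (le_max_left _ _) hk)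
    rw [norm_norm, Real.norm_eq_abs, abs_of_nonneg (Real.sqrt_nonneg _)] at hbd
    calc ‖θ k ω‖ ≤ C * Real.sqrt (β k * Real.log (u k)) := hbd
      _ ≤ C' * Real.sqrt (β k * Real.log (u k)) :=
          mul_le_mul_of_nonneg_right (le_max_left _ _) (Real.sqrt_nonneg _)
      _ ≤ C' * (C₃ * (k:ℝ) ^ (-(b/2)) * Real.log k) := mul_le_mul_of_nonneg_left hbound hC'0
      _ = C₂ * (k:ℝ) ^ (-(b/2)) * Real.log k := by rw [hC₂def]; ring
  have hdiff0 : ∀ k : ℕ, 2 ≤ k → 0 ≤ (β k)⁻¹ - (β (k-1))⁻¹ := by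
    intro k hk
    rw [haeq, haeq]
    have h1 : ((k-1:ℕ):ℝ) ^ b ≤ (k:ℝ) ^ b :=
      Real.rpow_le_rpow (Nat.cast_nonneg _) (by exact_mod_cast Nat.sub_le k 1) hb0.le
    have h0 : (0:ℝ) ≤ β₀⁻¹ := by positivity
    nlinarith
  set B₀ : ℝ := (β 1)⁻¹ * ‖θ 1 ω‖ with hB₀def
  have hB₀0 : 0 ≤ B₀ := mul_nonneg (inv_nonneg.2 (hβnonneg 1)) (norm_nonneg _)
  set H : ℝ := ∑ k ∈ Finset.Ioc 1 N₁, ((β k)⁻¹ - (β (k-1))⁻¹) * ‖θ k ω‖ with hHdef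
  have hH0 : 0 ≤ H := Finset.sum_nonneg fun k hk =>
    mul_nonneg (hdiff0 k (by have := (Finset.mem_Ioc.1 hk).1; omega)) (norm_nonneg _)
  set K : ℝ := 2*β₀⁻¹*C₂ + B₀ + H + 4*β₀⁻¹*C₂ with hKdef
  -- norm bound via Abel summation
  have hnorm : ∀ n : ℕ, 1 ≤ n →
      ‖∑ k ∈ Finset.Icc 1 n, (β k)⁻¹ • (θ (k+1) ω - θ k ω)‖
        ≤ (β n)⁻¹ * ‖θ (n+1) ω‖ + B₀
          + ∑ k ∈ Finset.Icc 2 n, ((β k)⁻¹ - (β (k-1))⁻¹) * ‖θ k ω‖ := by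
    intro n hn
    have habel := abel_identity (fun k => (β k)⁻¹) (fun k => θ k ω) n hn
    rw [habel]
    have h1 : ‖(β n)⁻¹ • θ (n+1) ω - (β 1)⁻¹ • θ 1 ω
        - ∑ k ∈ Finset.Icc 2 n, ((β k)⁻¹ - (β (k-1))⁻¹) • θ k ω‖
        ≤ ‖(β n)⁻¹ • θ (n+1) ω‖ + ‖(β 1)⁻¹ • θ 1 ω‖
          + ‖∑ k ∈ Finset.Icc 2 n, ((β k)⁻¹ - (β (k-1))⁻¹) • θ k ω‖ := by
      refine le_trans (norm_sub_le _ _) ?_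
      exact add_le_add (norm_sub_le _ _) le_rfl
    refine le_trans h1 (add_le_add (add_le_add ?_ ?_) ?_)
    · rw [norm_smul, Real.norm_eq_abs, abs_of_nonneg (inv_nonneg.2 (hβnonneg n))]
    · rw [hB₀def, norm_smul, Real.norm_eq_abs, abs_of_nonneg (inv_nonneg.2 (hβnonneg 1))]
    · refine le_trans (norm_sum_le _ _) ?_
      apply Finset.sum_le_sum
      intro k hk
      rw [norm_smul, Real.norm_eq_abs, abs_of_nonneg (hdiff0 k (Finset.mem_Icc.1 hk).1)]
  -- main eventual bound
  have hmain : ∀ n : ℕ, N₁ + 1 ≤ n →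
      ‖∑ k ∈ Finset.Icc 1 n, (β k)⁻¹ • (θ (k+1) ω - θ k ω)‖
        ≤ K * ((n:ℝ) ^ (b/2) * Real.log n) := by
    intro n hn
    have hn1 : 1 ≤ n := by omega
    have hn3 : 3 ≤ n := by omega
    have hn3' : (3:ℝ) ≤ (n:ℝ) := by exact_mod_cast hn3
    have hn0 : (0:ℝ) < (n:ℝ) := by linarith
    have hlogn : 1 ≤ Real.log n := by
      rw [Real.le_log_iff_exp_le hn0]
      have := Real.exp_one_lt_d9; linarith
    have hrp1 : (1:ℝ) ≤ (n:ℝ) ^ (b/2) := by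
      rw [show (1:ℝ) = (1:ℝ) ^ (b/2) from (Real.one_rpow _).symm]
      exact Real.rpow_le_rpow zero_le_one (by linarith) (by linarith)
    -- piece 1
    have hp1 : (β n)⁻¹ * ‖θ (n+1) ω‖ ≤ 2*β₀⁻¹*C₂ * ((n:ℝ) ^ (b/2) * Real.log n) := by
      have hbd := hθbd (n+1) (by omega)
      have hc : ((n+1:ℕ):ℝ) = (n:ℝ) + 1 := by push_cast; ring
      rw [hc] at hbd
      have e1 : ((n:ℝ)+1) ^ (-(b/2)) ≤ (n:ℝ) ^ (-(b/2)) :=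
        Real.rpow_le_rpow_of_nonpos hn0 (by linarith) (by linarith)
      have e2 : Real.log ((n:ℝ)+1) ≤ 2 * Real.log n := by
        have h1 : ((n:ℝ)+1) ≤ (n:ℝ)^2 := by nlinarith
        calc Real.log ((n:ℝ)+1) ≤ Real.log ((n:ℝ)^2) := Real.log_le_log (by linarith) h1
          _ = 2 * Real.log n := by rw [Real.log_pow]; norm_num
      have e3 : ‖θ (n+1) ω‖ ≤ (C₂ * (n:ℝ) ^ (-(b/2))) * (2 * Real.log n) := by
        calc ‖θ (n+1) ω‖ ≤ C₂ * ((n:ℝ)+1) ^ (-(b/2)) * Real.log ((n:ℝ)+1) := hbd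
          _ ≤ (C₂ * (n:ℝ) ^ (-(b/2))) * (2 * Real.log n) :=
            mul_le_mul (mul_le_mul_of_nonneg_left e1 hC₂0) e2
              (Real.log_nonneg (by linarith))
              (mul_nonneg hC₂0 (Real.rpow_nonneg hn0.le _))
      have hbb : (n:ℝ) ^ b * (n:ℝ) ^ (-(b/2)) = (n:ℝ) ^ (b/2) := by
        rw [← Real.rpow_add hn0]; congr 1; ring
      calc (β n)⁻¹ * ‖θ (n+1) ω‖ = β₀⁻¹ * (n:ℝ) ^ b * ‖θ (n+1) ω‖ := by rw [haeq]
        _ ≤ β₀⁻¹ * (n:ℝ) ^ b * ((C₂ * (n:ℝ) ^ (-(b/2))) * (2 * Real.log n)) :=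
          mul_le_mul_of_nonneg_left e3 (by positivity)
        _ = 2*β₀⁻¹*C₂ * (((n:ℝ) ^ b * (n:ℝ) ^ (-(b/2))) * Real.log n) := by ring
        _ = 2*β₀⁻¹*C₂ * ((n:ℝ) ^ (b/2) * Real.log n) := by rw [hbb]
    -- tail
    have htail : ∑ k ∈ Finset.Ioc N₁ n, ((β k)⁻¹ - (β (k-1))⁻¹) * ‖θ k ω‖
        ≤ 4*β₀⁻¹*C₂ * ((n:ℝ) ^ (b/2) * Real.log n) := by
      have hbne : b ≠ 0 := ne_of_gt hb0
      have hterm : ∀ k ∈ Finset.Ioc N₁ n, ((β k)⁻¹ - (β (k-1))⁻¹) * ‖θ k ω‖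
          ≤ (4*β₀⁻¹*C₂*Real.log n) * ((k:ℝ) ^ (b/2) - ((k-1:ℕ):ℝ) ^ (b/2)) := by
        intro k hk
        obtain ⟨hk1, hk2⟩ := Finset.mem_Ioc.1 hk
        have hk4 : 4 ≤ k := by omega
        have hk4' : (4:ℝ) ≤ (k:ℝ) := by exact_mod_cast hk4
        have hk0 : (0:ℝ) < (k:ℝ) := by linarith
        have hx2 : (2:ℝ) ≤ (k:ℝ) := by linarith
        have hcast : ((k-1:ℕ):ℝ) = (k:ℝ) - 1 := by
          rw [Nat.cast_sub (by omega : 1 ≤ k), Nat.cast_one]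
        have hlogk' : Real.log k ≤ Real.log n := Real.log_le_log hk0 (by exact_mod_cast hk2)
        have hθk := hθbd k (by omega)
        have hd1 : (β k)⁻¹ - (β (k-1))⁻¹ = β₀⁻¹ * ((k:ℝ) ^ b - ((k:ℝ)-1) ^ b) := by
          rw [haeq, haeq, hcast]; ring
        have hd2 : (k:ℝ) ^ b - ((k:ℝ)-1) ^ b ≤ b * ((k:ℝ)-1) ^ (b-1) :=
          (rpow_sub_bounds hb0 hb2 hx2).2
        have hd3 : ((k:ℝ)-1) ^ (b-1) ≤ 2 * (k:ℝ) ^ (b-1) := by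
          have ha : ((k:ℝ)/2) ≤ (k:ℝ) - 1 := by linarith
          have hb' : ((k:ℝ)-1) ^ (b-1) ≤ ((k:ℝ)/2) ^ (b-1) :=
            Real.rpow_le_rpow_of_nonpos (by linarith) ha (by linarith)
          have hc' : ((k:ℝ)/2) ^ (b-1) = (k:ℝ) ^ (b-1) * ((1:ℝ)/2) ^ (b-1) := by
            rw [show (k:ℝ)/2 = (k:ℝ) * (1/2) by ring, Real.mul_rpow hk0.le (by norm_num)]
          have hd' : ((1:ℝ)/2) ^ (b-1) ≤ 2 := by
            rw [show (1:ℝ)/2 = (2:ℝ)⁻¹ by norm_num, Real.inv_rpow (by norm_num),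
              ← Real.rpow_neg (by norm_num)]
            calc (2:ℝ) ^ (-(b-1)) ≤ (2:ℝ) ^ (1:ℝ) :=
                Real.rpow_le_rpow_of_exponent_le one_le_two (by linarith)
              _ = 2 := Real.rpow_one 2
          have hrk : (0:ℝ) ≤ (k:ℝ) ^ (b-1) := Real.rpow_nonneg hk0.le _
          calc ((k:ℝ)-1) ^ (b-1) ≤ (k:ℝ) ^ (b-1) * ((1:ℝ)/2) ^ (b-1) := by
                rw [← hc']; exact hb'
            _ ≤ (k:ℝ) ^ (b-1) * 2 := mul_le_mul_of_nonneg_left hd' hrk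
            _ = 2 * (k:ℝ) ^ (b-1) := mul_comm _ _
        have hdiffle : (β k)⁻¹ - (β (k-1))⁻¹ ≤ β₀⁻¹ * (2*b*(k:ℝ) ^ (b-1)) := by
          rw [hd1]
          have h5 : (k:ℝ) ^ b - ((k:ℝ)-1) ^ b ≤ 2*b*(k:ℝ) ^ (b-1) := by
            nlinarith [mul_le_mul_of_nonneg_left hd3 hb0.le]
          exact mul_le_mul_of_nonneg_left h5 (by positivity)
        have hθk' : ‖θ k ω‖ ≤ C₂ * (k:ℝ) ^ (-(b/2)) * Real.log n := by
          calc ‖θ k ω‖ ≤ C₂ * (k:ℝ) ^ (-(b/2)) * Real.log k := hθk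
            _ ≤ C₂ * (k:ℝ) ^ (-(b/2)) * Real.log n :=
              mul_le_mul_of_nonneg_left hlogk'
                (mul_nonneg hC₂0 (Real.rpow_nonneg hk0.le _))
        have hprod : ((β k)⁻¹ - (β (k-1))⁻¹) * ‖θ k ω‖
            ≤ (β₀⁻¹ * (2*b*(k:ℝ) ^ (b-1))) * (C₂ * (k:ℝ) ^ (-(b/2)) * Real.log n) :=
          mul_le_mul hdiffle hθk' (norm_nonneg _) (by positivity)
        have hkexp : (k:ℝ) ^ (b-1) * (k:ℝ) ^ (-(b/2)) = (k:ℝ) ^ (b/2-1) := by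
          rw [← Real.rpow_add hk0]; congr 1; ring
        have hd6 := (rpow_sub_bounds (by linarith : (0:ℝ) < b/2) (by linarith) hx2).1
        have hd7 : (k:ℝ) ^ (b/2-1) ≤ (2/b) * ((k:ℝ) ^ (b/2) - ((k:ℝ)-1) ^ (b/2)) := by
          rw [show (k:ℝ) ^ (b/2-1) = (2/b) * ((b/2) * (k:ℝ) ^ (b/2-1)) by field_simp]
          exact mul_le_mul_of_nonneg_left hd6 (by positivity)
        have hcoef0 : (0:ℝ) ≤ 2*b*β₀⁻¹*C₂*Real.log n := by
          have h1 : (0:ℝ) ≤ Real.log n := by linarith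
          have h2 : (0:ℝ) ≤ 2*b*β₀⁻¹ := by positivity
          exact mul_nonneg (mul_nonneg h2 hC₂0) h1
        calc ((β k)⁻¹ - (β (k-1))⁻¹) * ‖θ k ω‖
            ≤ (β₀⁻¹ * (2*b*(k:ℝ) ^ (b-1))) * (C₂ * (k:ℝ) ^ (-(b/2)) * Real.log n) := hprod
          _ = (2*b*β₀⁻¹*C₂*Real.log n) * ((k:ℝ) ^ (b-1) * (k:ℝ) ^ (-(b/2))) := by ring
          _ = (2*b*β₀⁻¹*C₂*Real.log n) * (k:ℝ) ^ (b/2-1) := by rw [hkexp]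
          _ ≤ (2*b*β₀⁻¹*C₂*Real.log n) * ((2/b) * ((k:ℝ) ^ (b/2) - ((k:ℝ)-1) ^ (b/2))) :=
            mul_le_mul_of_nonneg_left hd7 hcoef0
          _ = (4*β₀⁻¹*C₂*Real.log n) * ((k:ℝ) ^ (b/2) - ((k:ℝ)-1) ^ (b/2)) := by
            field_simp; ring
          _ = (4*β₀⁻¹*C₂*Real.log n) * ((k:ℝ) ^ (b/2) - ((k-1:ℕ):ℝ) ^ (b/2)) := by
            rw [hcast]
      have hcoef0' : (0:ℝ) ≤ 4*β₀⁻¹*C₂*Real.log n := by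
        have h1 : (0:ℝ) ≤ Real.log n := by linarith
        have h2 : (0:ℝ) ≤ 4*β₀⁻¹ := by positivity
        exact mul_nonneg (mul_nonneg h2 hC₂0) h1
      calc ∑ k ∈ Finset.Ioc N₁ n, ((β k)⁻¹ - (β (k-1))⁻¹) * ‖θ k ω‖
          ≤ ∑ k ∈ Finset.Ioc N₁ n,
            (4*β₀⁻¹*C₂*Real.log n) * ((k:ℝ) ^ (b/2) - ((k-1:ℕ):ℝ) ^ (b/2)) :=
          Finset.sum_le_sum hterm
        _ = (4*β₀⁻¹*C₂*Real.log n)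
            * ∑ k ∈ Finset.Ioc N₁ n, (((k:ℕ):ℝ) ^ (b/2) - ((k-1:ℕ):ℝ) ^ (b/2)) := by
          rw [← Finset.mul_sum]
        _ = (4*β₀⁻¹*C₂*Real.log n) * ((n:ℝ) ^ (b/2) - (N₁:ℝ) ^ (b/2)) := by
          rw [telescope_Ioc (fun j : ℕ => ((j:ℕ):ℝ) ^ (b/2)) n (by omega : N₁ ≤ n)]
        _ ≤ (4*β₀⁻¹*C₂*Real.log n) * (n:ℝ) ^ (b/2) := by
          have h1 : (0:ℝ) ≤ (N₁:ℝ) ^ (b/2) := Real.rpow_nonneg (Nat.cast_nonneg _) _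
          nlinarith
        _ = 4*β₀⁻¹*C₂ * ((n:ℝ) ^ (b/2) * Real.log n) := by ring
    -- split middle sum
    have hIccIoc : Finset.Icc 2 n = Finset.Ioc 1 n := by
      ext x; simp only [Finset.mem_Icc, Finset.mem_Ioc]; omega
    have hsplit : ∑ k ∈ Finset.Icc 2 n, ((β k)⁻¹ - (β (k-1))⁻¹) * ‖θ k ω‖
        = H + ∑ k ∈ Finset.Ioc N₁ n, ((β k)⁻¹ - (β (k-1))⁻¹) * ‖θ k ω‖ := by
      rw [hIccIoc, hHdef]
      exact (Finset.sum_Ioc_consecutive _ (by omega : 1 ≤ N₁) (by omega : N₁ ≤ n)).symm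
    have hX1 : (1:ℝ) ≤ (n:ℝ) ^ (b/2) * Real.log n := by nlinarith
    calc ‖∑ k ∈ Finset.Icc 1 n, (β k)⁻¹ • (θ (k+1) ω - θ k ω)‖
        ≤ (β n)⁻¹ * ‖θ (n+1) ω‖ + B₀
          + ∑ k ∈ Finset.Icc 2 n, ((β k)⁻¹ - (β (k-1))⁻¹) * ‖θ k ω‖ := hnorm n hn1
      _ = (β n)⁻¹ * ‖θ (n+1) ω‖ + B₀
          + (H + ∑ k ∈ Finset.Ioc N₁ n, ((β k)⁻¹ - (β (k-1))⁻¹) * ‖θ k ω‖) := by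
        rw [hsplit]
      _ ≤ 2*β₀⁻¹*C₂ * ((n:ℝ) ^ (b/2) * Real.log n) + B₀
          + (H + 4*β₀⁻¹*C₂ * ((n:ℝ) ^ (b/2) * Real.log n)) := by
        exact add_le_add (add_le_add hp1 le_rfl) (add_le_add le_rfl htail)
      _ ≤ K * ((n:ℝ) ^ (b/2) * Real.log n) := by
        rw [hKdef]
        nlinarith [mul_le_mul_of_nonneg_left hX1 hB₀0, mul_le_mul_of_nonneg_left hX1 hH0]
  -- conclusion
  have hO : (fun n : ℕ => (Real.sqrt (n:ℝ))⁻¹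
      * ‖∑ k ∈ Finset.Icc 1 n, (β k)⁻¹ • (θ (k+1) ω - θ k ω)‖)
      =O[atTop] fun n : ℕ => (n:ℝ) ^ ((b - 1)/2) * Real.log (n:ℝ) := by
    rw [isBigO_iff]
    refine ⟨K, ?_⟩
    filter_upwards [eventually_ge_atTop (N₁ + 1)] with n hn
    have hn3' : (3:ℝ) ≤ (n:ℝ) := by exact_mod_cast (by omega : 3 ≤ n)
    have hn0 : (0:ℝ) < (n:ℝ) := by linarith
    have hn1' : (1:ℝ) ≤ (n:ℝ) := by linarith
    have hmainn := hmain n hn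
    have hs0 : (0:ℝ) ≤ (Real.sqrt (n:ℝ))⁻¹ := inv_nonneg.2 (Real.sqrt_nonneg _)
    have hsinv : (Real.sqrt (n:ℝ))⁻¹ = (n:ℝ) ^ (-(1/2) : ℝ) := by
      rw [Real.sqrt_eq_rpow, ← Real.rpow_neg hn0.le]
    have hexp : (n:ℝ) ^ (-(1/2):ℝ) * (n:ℝ) ^ (b/2) = (n:ℝ) ^ ((b-1)/2) := by
      rw [← Real.rpow_add hn0]; congr 1; ring
    simp only [Real.norm_eq_abs]
    rw [abs_of_nonneg (mul_nonneg hs0 (norm_nonneg _)),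
      abs_of_nonneg (mul_nonneg (Real.rpow_nonneg hn0.le _) (Real.log_nonneg hn1'))]
    calc (Real.sqrt (n:ℝ))⁻¹ * ‖∑ k ∈ Finset.Icc 1 n, (β k)⁻¹ • (θ (k+1) ω - θ k ω)‖
        ≤ (Real.sqrt (n:ℝ))⁻¹ * (K * ((n:ℝ) ^ (b/2) * Real.log n)) :=
        mul_le_mul_of_nonneg_left hmainn hs0
      _ = K * (((n:ℝ) ^ (-(1/2):ℝ) * (n:ℝ) ^ (b/2)) * Real.log n) := by rw [hsinv]; ring
      _ = K * ((n:ℝ) ^ ((b-1)/2) * Real.log n) := by rw [hexp]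
  refine ⟨hO, ?_⟩
  have hglim : Tendsto (fun n : ℕ => (n:ℝ) ^ ((b-1)/2) * Real.log n) atTop (nhds 0) := by
    have h1 : Tendsto (fun x : ℝ => Real.log x / x ^ ((1-b)/2)) atTop (nhds 0) :=
      (isLittleO_log_rpow_atTop (by linarith : (0:ℝ) < (1-b)/2)).tendsto_div_nhds_zero
    have h2 : Tendsto (fun x : ℝ => x ^ ((b-1)/2) * Real.log x) atTop (nhds 0) := by
      apply h1.congr'
      filter_upwards [eventually_gt_atTop (0:ℝ)] with x hx
      rw [show (b-1)/2 = -((1-b)/2) by ring, Real.rpow_neg hx.le]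
      ring
    exact h2.comp tendsto_natCast_atTop_atTop
  rw [tendsto_zero_iff_norm_tendsto_zero]
  refine Tendsto.congr (fun n => ?_) (hO.trans_tendsto hglim)
  rw [norm_smul, Real.norm_eq_abs, abs_of_nonneg (inv_nonneg.2 (Real.sqrt_nonneg _))]
end

section
/- (Abel-summation bound for the slow component). Let a ∈ (1/2, 1), γ₀ > 0, γ_n = γ₀ n^{-a} and s_n = Σ_{k=1}^n γ_k. If (μ_n) is an ℝ^{d'}-valued random sequence with ‖μ_n‖ = O(√(γ_n log s_n)) almost surely, then almost surely (1/√n) ‖Σ_{k=1}^n γ_k^{-1}(μ_{k+1} - μ_k)‖ = O(n^{-(1-a)/2} log n); in particular (1/√n) Σ_{k=1}^n γ_k^{-1}(μ_{k+1} - μ_k) → 0 almost surely. -/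
open MeasureTheory Filter Asymptotics Matrix

set_option maxHeartbeats 1000000

lemma my_abel {E : Type*} [AddCommGroup E] [Module ℝ E] (c : ℕ → ℝ) (f : ℕ → E) (n : ℕ) :
    ∑ k ∈ Finset.Icc 1 (n+1), c k • (f (k+1) - f k)
      = c (n+1) • f (n+2) - c 1 • f 1 - ∑ k ∈ Finset.Icc 1 n, (c (k+1) - c k) • f (k+1) := by
  induction n with
  | zero => simp [smul_sub]
  | succ m ih =>
    rw [Finset.sum_Icc_succ_top (by omega), ih, Finset.sum_Icc_succ_top (by omega : 1 ≤ m+1)]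
    module

lemma rpow_diff_le {b x : ℝ} (hb0 : 0 ≤ b) (hb1 : b ≤ 1) (hx : 0 < x) :
    (x+1)^b - x^b ≤ b * x^(b-1) := by
  have h1 : x + 1 = x * (1 + 1/x) := by field_simp
  have h2 : (x+1)^b = x^b * (1+1/x)^b := by
    rw [h1, Real.mul_rpow hx.le (by positivity)]
  have h3 : (1+1/x)^b ≤ 1 + b * (1/x) := by
    have : (0:ℝ) ≤ 1/x := by positivity
    exact rpow_one_add_le_one_add_mul_self (by linarith) hb0 hb1
  have h4 : x^b * (1 + b * (1/x)) = x^b + b * x^(b-1) := by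
    rw [Real.rpow_sub hx, Real.rpow_one]
    field_simp
  nlinarith [Real.rpow_nonneg hx.le b]

lemma le_rpow_diff {b x : ℝ} (hb0 : 0 ≤ b) (hb1 : b ≤ 1) (hx : 0 ≤ x) :
    b * (x+1)^(b-1) ≤ (x+1)^b - x^b := by
  have hx1 : (0:ℝ) < x + 1 := by linarith
  have h1 : x = (x+1) * (1 + (-(1/(x+1)))) := by field_simp; ring
  have hfrac : 1/(x+1) ≤ 1 := by rw [div_le_one hx1]; linarith
  have h2 : x^b = (x+1)^b * (1 + (-(1/(x+1))))^b := by
    nth_rewrite 1 [h1]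
    exact Real.mul_rpow hx1.le (by linarith)
  have h3 : (1 + (-(1/(x+1))))^b ≤ 1 + b * (-(1/(x+1))) := by
    apply rpow_one_add_le_one_add_mul_self _ hb0 hb1
    rw [neg_le, neg_neg]
    rw [div_le_one hx1]; linarith
  have h4 : (x+1)^b * (1 + b * (-(1/(x+1)))) = (x+1)^b - b * (x+1)^(b-1) := by
    rw [Real.rpow_sub hx1, Real.rpow_one]
    field_simp
    ring
  nlinarith [Real.rpow_nonneg hx1.le b]

lemma sum_rpow_le {b : ℝ} (hb0 : 0 < b) (hb1 : b ≤ 1) (n : ℕ) :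
    ∑ k ∈ Finset.Icc 1 n, (k:ℝ)^(b-1) ≤ (n:ℝ)^b / b := by
  induction n with
  | zero => simp [Real.zero_rpow hb0.ne']
  | succ m ih =>
    rw [Finset.sum_Icc_succ_top (by omega)]
    have key := le_rpow_diff hb0.le hb1 (Nat.cast_nonneg m : (0:ℝ) ≤ m)
    have hcast : ((m:ℝ)+1) = ((m+1 : ℕ) : ℝ) := by push_cast; ring
    rw [hcast] at key
    have h2 : ((m+1:ℕ):ℝ)^(b-1) ≤ ((m+1:ℕ):ℝ)^b / b - (m:ℝ)^b / b := by
      rw [div_sub_div_same, le_div_iff₀ hb0, mul_comm]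
      exact key
    linarith

lemma log_succ_le {n : ℕ} (hn : 2 ≤ n) : Real.log ((n:ℝ)+1) ≤ 2 * Real.log n := by
  have hn2 : (2:ℝ) ≤ n := by exact_mod_cast hn
  have h : ((n:ℝ)+1) ≤ (n:ℝ)^2 := by nlinarith
  have h2 := Real.log_le_log (by positivity) h
  rwa [Real.log_pow] at h2
  
lemma rpow_base_succ_le {x : ℝ} (hx : 1 ≤ x) {c : ℝ} (hc : 0 ≤ c) : (x+1)^(-c) ≤ x^(-c) := by
  have hx0 : (0:ℝ) < x := by linarith
  rw [Real.rpow_neg hx0.le, Real.rpow_neg (by linarith)]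
  exact inv_anti₀ (Real.rpow_pos_of_pos hx0 c) (Real.rpow_le_rpow hx0.le (by linarith) hc)

lemma one_le_log_nat {m : ℕ} (hm : 3 ≤ m) : 1 ≤ Real.log m := by
  have hm3 : (3:ℝ) ≤ m := by exact_mod_cast hm
  rw [Real.le_log_iff_exp_le (by linarith)]
  have := Real.exp_one_lt_d9
  linarith

lemma main_det {d' : ℕ} {a γ₀ : ℝ} (ha1 : 1/2 < a) (ha2 : a < 1) (hγ₀ : 0 < γ₀)
    (γ s : ℕ → ℝ)
    (hγ : ∀ n : ℕ, γ n = γ₀ * (n : ℝ) ^ (-a))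
    (hs : ∀ n, s n = ∑ k ∈ Finset.Icc 1 n, γ k)
    (f : ℕ → EuclideanSpace ℝ (Fin d'))
    (hf : (fun n : ℕ => ‖f n‖) =O[atTop] fun n : ℕ => Real.sqrt (γ n * Real.log (s n))) :
    (fun n : ℕ => (Real.sqrt (n : ℝ))⁻¹ * ‖∑ k ∈ Finset.Icc 1 n, (γ k)⁻¹ • (f (k+1) - f k)‖)
      =O[atTop] fun n : ℕ => (n : ℝ) ^ (-((1 - a)/2)) * Real.log (n : ℝ) := by
  have ha0 : 0 < a := by linarith
  -- Step A+B : pointwise eventual bound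
  obtain ⟨C, hC0, hCb⟩ := hf.exists_nonneg
  set M : ℝ := C * Real.sqrt (2*γ₀) with hMdef
  have hM0 : 0 ≤ M := by positivity
  have hEv : ∀ᶠ n : ℕ in atTop, ‖f n‖ ≤ M * ((n:ℝ)^(-(a/2)) * Real.log n) := by
    have hlogN : ∀ᶠ n : ℕ in atTop, max 1 (Real.log γ₀) ≤ Real.log n :=
      tendsto_natCast_atTop_atTop.eventually (Real.tendsto_log_atTop.eventually_ge_atTop _)
    filter_upwards [hCb.bound, hlogN, eventually_ge_atTop 1] with n hb hlog hn
    have hn0 : (0:ℝ) < n := by exact_mod_cast hn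
    have hspos : 0 < s n := by
      rw [hs]
      apply Finset.sum_pos
      · intro k hk
        have hk0 : (0:ℝ) < k := by exact_mod_cast (Finset.mem_Icc.1 hk).1
        rw [hγ]; positivity
      · exact Finset.nonempty_Icc.2 hn
    have hsle : s n ≤ γ₀ * n := by
      rw [hs]
      calc ∑ k ∈ Finset.Icc 1 n, γ k ≤ ∑ _k ∈ Finset.Icc 1 n, γ₀ := by
            apply Finset.sum_le_sum
            intro k hk
            have h1k : (1:ℝ) ≤ k := by exact_mod_cast (Finset.mem_Icc.1 hk).1
            have := Real.rpow_le_one_of_one_le_of_nonpos h1k (by linarith : -a ≤ 0)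
            rw [hγ]; nlinarith
        _ = γ₀ * n := by
            rw [Finset.sum_const, Nat.card_Icc]
            simp [mul_comm]
    have hlogs : Real.log (s n) ≤ 2 * Real.log n := by
      have h1 := Real.log_le_log hspos hsle
      rw [Real.log_mul (ne_of_gt hγ₀) (ne_of_gt hn0)] at h1
      have h2 := le_trans (le_max_right 1 (Real.log γ₀)) hlog
      linarith
    have hγnn : 0 ≤ γ n := by rw [hγ]; positivity
    have hstep : γ n * Real.log (s n) ≤ 2*γ₀ * ((n:ℝ)^(-a) * Real.log n) := by
      calc γ n * Real.log (s n) ≤ γ n * (2 * Real.log n) :=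
            mul_le_mul_of_nonneg_left hlogs hγnn
        _ = 2*γ₀ * ((n:ℝ)^(-a) * Real.log n) := by rw [hγ]; ring
    have hlog1 : (1:ℝ) ≤ Real.log n := le_trans (le_max_left _ _) hlog
    have hsqrt : Real.sqrt (γ n * Real.log (s n))
        ≤ Real.sqrt (2*γ₀) * ((n:ℝ)^(-(a/2)) * Real.log n) := by
      calc Real.sqrt (γ n * Real.log (s n))
          ≤ Real.sqrt (2*γ₀ * ((n:ℝ)^(-a) * Real.log n)) := Real.sqrt_le_sqrt hstep
        _ = Real.sqrt (2*γ₀) * (Real.sqrt ((n:ℝ)^(-a)) * Real.sqrt (Real.log n)) := by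
            rw [Real.sqrt_mul (by positivity : (0:ℝ) ≤ 2*γ₀) ((n:ℝ)^(-a) * Real.log n),
              Real.sqrt_mul (by positivity : (0:ℝ) ≤ (n:ℝ)^(-a)) (Real.log n)]
        _ = Real.sqrt (2*γ₀) * ((n:ℝ)^(-(a/2)) * Real.sqrt (Real.log n)) := by
            have hxp : (n:ℝ)^(-a * (1/2)) = (n:ℝ)^(-(a/2)) := by ring_nf
            rw [Real.sqrt_eq_rpow ((n:ℝ)^(-a)), ← Real.rpow_mul hn0.le, hxp]
        _ ≤ Real.sqrt (2*γ₀) * ((n:ℝ)^(-(a/2)) * Real.log n) := by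
            gcongr
            nth_rewrite 2 [← Real.sqrt_sq (by linarith : (0:ℝ) ≤ Real.log n)]
            exact Real.sqrt_le_sqrt (by nlinarith)
    rw [norm_norm, Real.norm_eq_abs, abs_of_nonneg (Real.sqrt_nonneg _)] at hb
    calc ‖f n‖ ≤ C * Real.sqrt (γ n * Real.log (s n)) := hb
      _ ≤ C * (Real.sqrt (2*γ₀) * ((n:ℝ)^(-(a/2)) * Real.log n)) :=
          mul_le_mul_of_nonneg_left hsqrt hC0
      _ = M * ((n:ℝ)^(-(a/2)) * Real.log n) := by rw [hMdef]; ring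
  obtain ⟨N₀, hN₀⟩ := eventually_atTop.1 hEv
  set N := max N₀ 3 with hNdef
  have hN3 : 3 ≤ N := le_max_right _ _
  have hφ : ∀ m : ℕ, N ≤ m → ‖f m‖ ≤ M * ((m:ℝ)^(-(a/2)) * Real.log m) :=
    fun m hm => hN₀ m (le_trans (le_max_left _ _) hm)
  -- the coefficients
  set c : ℕ → ℝ := fun k => (γ k)⁻¹ with hcdef
  have hc : ∀ k : ℕ, c k = γ₀⁻¹ * (k:ℝ)^a := by
    intro k
    simp only [hcdef, hγ]
    rw [mul_inv, Real.rpow_neg (Nat.cast_nonneg k), inv_inv]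
  have hcnn : ∀ k : ℕ, 0 ≤ c k := by intro k; rw [hc]; positivity
  have hcmono : ∀ k : ℕ, c k ≤ c (k+1) := by
    intro k
    rw [hc, hc]
    apply mul_le_mul_of_nonneg_left _ (inv_nonneg.2 hγ₀.le)
    have h : ((k:ℕ):ℝ) ≤ ((k+1:ℕ):ℝ) := by push_cast; linarith
    exact Real.rpow_le_rpow (Nat.cast_nonneg k) h ha0.le
  set K₂ : ℝ := c 1 * ‖f 1‖ with hK2
  set K₃ : ℝ := ∑ k ∈ Finset.Icc 1 N, (c (k+1) - c k) * ‖f (k+1)‖ with hK3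
  set K : ℝ := 2*M/γ₀ + K₂ + K₃ + 4*M/γ₀ with hK
  have hK₂0 : 0 ≤ K₂ := mul_nonneg (hcnn 1) (norm_nonneg _)
  have hK₃0 : 0 ≤ K₃ :=
    Finset.sum_nonneg fun k _ => mul_nonneg (by linarith [hcmono k]) (norm_nonneg _)
  have key : ∀ n : ℕ, N + 1 ≤ n →
      ‖∑ k ∈ Finset.Icc 1 n, c k • (f (k+1) - f k)‖ ≤ K * ((n:ℝ)^(a/2) * Real.log n) := by
    intro n hn
    obtain ⟨m, rfl⟩ : ∃ m, n = m + 1 := ⟨n - 1, by omega⟩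
    have hm : N ≤ m := by omega
    have hn3 : 3 ≤ m + 1 := by omega
    have hn1R : (1:ℝ) ≤ ((m+1:ℕ):ℝ) := by exact_mod_cast (by omega : 1 ≤ m+1)
    have hpos : (0:ℝ) < ((m+1:ℕ):ℝ) := by linarith
    have hlogn1 : 1 ≤ Real.log ((m+1:ℕ):ℝ) := one_le_log_nat hn3
    have hlogn0 : (0:ℝ) ≤ Real.log ((m+1:ℕ):ℝ) := by linarith
    have hrpow1 : 1 ≤ ((m+1:ℕ):ℝ)^(a/2) := by
      rw [show (1:ℝ) = (1:ℝ)^(a/2) from (Real.one_rpow _).symm]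
      exact Real.rpow_le_rpow zero_le_one hn1R (by linarith)
    -- term 1
    have hT1 : c (m+1) * ‖f (m+2)‖
        ≤ 2*M/γ₀ * (((m+1:ℕ):ℝ)^(a/2) * Real.log ((m+1:ℕ):ℝ)) := by
      have hb := hφ (m+2) (by omega)
      have hc2 : ((m+2:ℕ):ℝ) = ((m+1:ℕ):ℝ) + 1 := by push_cast; ring
      have h1 : ((m+2:ℕ):ℝ)^(-(a/2)) ≤ ((m+1:ℕ):ℝ)^(-(a/2)) := by
        rw [hc2]; exact rpow_base_succ_le hn1R (by linarith)
      have h2 : Real.log ((m+2:ℕ):ℝ) ≤ 2 * Real.log ((m+1:ℕ):ℝ) := by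
        rw [hc2]
        exact_mod_cast log_succ_le (by omega : 2 ≤ m+1)
      have hlog2 : (0:ℝ) ≤ Real.log ((m+2:ℕ):ℝ) :=
        Real.log_nonneg (by exact_mod_cast (by omega : 1 ≤ m+2))
      have hfb : ‖f (m+2)‖ ≤ M * (((m+1:ℕ):ℝ)^(-(a/2)) * (2 * Real.log ((m+1:ℕ):ℝ))) :=
        le_trans hb (mul_le_mul_of_nonneg_left
          (mul_le_mul h1 h2 hlog2 (Real.rpow_nonneg (by positivity) _)) hM0)
      calc c (m+1) * ‖f (m+2)‖
          ≤ c (m+1) * (M * (((m+1:ℕ):ℝ)^(-(a/2)) * (2 * Real.log ((m+1:ℕ):ℝ)))) :=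
            mul_le_mul_of_nonneg_left hfb (hcnn (m+1))
        _ = 2*M/γ₀ * ((((m+1:ℕ):ℝ)^a * ((m+1:ℕ):ℝ)^(-(a/2))) * Real.log ((m+1:ℕ):ℝ)) := by
            rw [hc]; ring
        _ = 2*M/γ₀ * (((m+1:ℕ):ℝ)^(a/2) * Real.log ((m+1:ℕ):ℝ)) := by
            have hxp : ((m+1:ℕ):ℝ)^a * ((m+1:ℕ):ℝ)^(-(a/2)) = ((m+1:ℕ):ℝ)^(a/2) := by
              rw [← Real.rpow_add hpos]; ring_nf
            rw [hxp]
    -- term 2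
    have hT2 : c 1 * ‖f 1‖ ≤ K₂ * (((m+1:ℕ):ℝ)^(a/2) * Real.log ((m+1:ℕ):ℝ)) := by
      rw [← hK2]
      have hX1 : 1 ≤ ((m+1:ℕ):ℝ)^(a/2) * Real.log ((m+1:ℕ):ℝ) := by nlinarith
      nlinarith [hK₂0, hX1]
    -- split the sum
    have hsplit : ∑ k ∈ Finset.Icc 1 m, (c (k+1) - c k) * ‖f (k+1)‖
        = K₃ + ∑ k ∈ Finset.Ioc N m, (c (k+1) - c k) * ‖f (k+1)‖ := by
      rw [hK3, show Finset.Icc 1 m = Finset.Ioc 0 m from Finset.Icc_add_one_left_eq_Ioc (a := 0) (b := m),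
        show Finset.Icc 1 N = Finset.Ioc 0 N from Finset.Icc_add_one_left_eq_Ioc (a := 0) (b := N),
        Finset.sum_Ioc_consecutive _ (Nat.zero_le N) hm]
    -- tail
    have htail : ∑ k ∈ Finset.Ioc N m, (c (k+1) - c k) * ‖f (k+1)‖
        ≤ 4*M/γ₀ * (((m+1:ℕ):ℝ)^(a/2) * Real.log ((m+1:ℕ):ℝ)) := by
      have hterm : ∀ k ∈ Finset.Ioc N m, (c (k+1) - c k) * ‖f (k+1)‖
          ≤ (2*a*M/γ₀ * Real.log ((m+1:ℕ):ℝ)) * (k:ℝ)^(a/2 - 1) := by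
        intro k hk
        obtain ⟨hkN, hkm⟩ := Finset.mem_Ioc.1 hk
        have hk1R : (1:ℝ) ≤ (k:ℝ) := by exact_mod_cast (by omega : 1 ≤ k)
        have hk0 : (0:ℝ) < k := by linarith
        have hck : c (k+1) - c k ≤ γ₀⁻¹ * (a * (k:ℝ)^(a-1)) := by
          rw [hc, hc]
          have hcast : ((k+1:ℕ):ℝ) = (k:ℝ)+1 := by push_cast; ring
          rw [hcast]
          have hd := rpow_diff_le ha0.le ha2.le hk0
          have h0 : (0:ℝ) ≤ γ₀⁻¹ := inv_nonneg.2 hγ₀.le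
          nlinarith
        have hfk : ‖f (k+1)‖ ≤ M * ((k:ℝ)^(-(a/2)) * (2 * Real.log ((m+1:ℕ):ℝ))) := by
          have hb := hφ (k+1) (by omega)
          have hcast : ((k+1:ℕ):ℝ) = (k:ℝ)+1 := by push_cast; ring
          have h1 : ((k+1:ℕ):ℝ)^(-(a/2)) ≤ (k:ℝ)^(-(a/2)) := by
            rw [hcast]; exact rpow_base_succ_le hk1R (by linarith)
          have h2 : Real.log ((k+1:ℕ):ℝ) ≤ 2 * Real.log ((m+1:ℕ):ℝ) := by
            have hle : Real.log ((k+1:ℕ):ℝ) ≤ Real.log ((m+1:ℕ):ℝ) :=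
              Real.log_le_log (by positivity) (by exact_mod_cast (by omega : k+1 ≤ m+1))
            linarith
          have hlogk0 : (0:ℝ) ≤ Real.log ((k+1:ℕ):ℝ) :=
            Real.log_nonneg (by exact_mod_cast (by omega : 1 ≤ k+1))
          exact le_trans hb (mul_le_mul_of_nonneg_left
            (mul_le_mul h1 h2 hlogk0 (Real.rpow_nonneg hk0.le _)) hM0)
        have hprod : (c (k+1) - c k) * ‖f (k+1)‖
            ≤ (γ₀⁻¹ * (a * (k:ℝ)^(a-1))) * (M * ((k:ℝ)^(-(a/2)) * (2 * Real.log ((m+1:ℕ):ℝ)))) :=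
          mul_le_mul hck hfk (norm_nonneg _) (by positivity)
        refine le_trans hprod (le_of_eq ?_)
        have hxp : (k:ℝ)^(a-1) * (k:ℝ)^(-(a/2)) = (k:ℝ)^(a/2 - 1) := by
          rw [← Real.rpow_add hk0]; ring_nf
        calc (γ₀⁻¹ * (a * (k:ℝ)^(a-1))) * (M * ((k:ℝ)^(-(a/2)) * (2 * Real.log ((m+1:ℕ):ℝ))))
            = (2*a*M/γ₀ * Real.log ((m+1:ℕ):ℝ)) * ((k:ℝ)^(a-1) * (k:ℝ)^(-(a/2))) := by ring
          _ = _ := by rw [hxp]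
      have hsub : ∑ k ∈ Finset.Ioc N m, (k:ℝ)^(a/2-1) ≤ ∑ k ∈ Finset.Icc 1 m, (k:ℝ)^(a/2-1) := by
        apply Finset.sum_le_sum_of_subset_of_nonneg
        · intro k hk
          obtain ⟨h1, h2⟩ := Finset.mem_Ioc.1 hk
          exact Finset.mem_Icc.2 ⟨by omega, h2⟩
        · intro k _ _
          positivity
      have hsum2 : ∑ k ∈ Finset.Icc 1 m, (k:ℝ)^(a/2-1) ≤ (m:ℝ)^(a/2)/(a/2) :=
        sum_rpow_le (by linarith) (by linarith) m
      have hm1 : (m:ℝ)^(a/2) ≤ ((m+1:ℕ):ℝ)^(a/2) :=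
        Real.rpow_le_rpow (Nat.cast_nonneg m) (by push_cast; linarith) (by linarith)
      have hconst : (0:ℝ) ≤ 2*a*M/γ₀ * Real.log ((m+1:ℕ):ℝ) :=
        mul_nonneg (by positivity) hlogn0
      calc ∑ k ∈ Finset.Ioc N m, (c (k+1) - c k) * ‖f (k+1)‖
          ≤ ∑ k ∈ Finset.Ioc N m, (2*a*M/γ₀ * Real.log ((m+1:ℕ):ℝ)) * (k:ℝ)^(a/2-1) :=
            Finset.sum_le_sum hterm
        _ = (2*a*M/γ₀ * Real.log ((m+1:ℕ):ℝ)) * ∑ k ∈ Finset.Ioc N m, (k:ℝ)^(a/2-1) := by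
            rw [Finset.mul_sum]
        _ ≤ (2*a*M/γ₀ * Real.log ((m+1:ℕ):ℝ)) * (((m+1:ℕ):ℝ)^(a/2)/(a/2)) := by
            apply mul_le_mul_of_nonneg_left _ hconst
            refine le_trans (le_trans hsub hsum2) ?_
            gcongr
        _ = 4*M/γ₀ * (((m+1:ℕ):ℝ)^(a/2) * Real.log ((m+1:ℕ):ℝ)) := by
            field_simp
            ring
    -- triangle inequality
    have tri : ‖c (m+1) • f (m+2) - c 1 • f 1
          - ∑ k ∈ Finset.Icc 1 m, (c (k+1) - c k) • f (k+1)‖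
        ≤ c (m+1) * ‖f (m+2)‖ + c 1 * ‖f 1‖
          + ∑ k ∈ Finset.Icc 1 m, (c (k+1) - c k) * ‖f (k+1)‖ := by
      have t3 : ‖∑ k ∈ Finset.Icc 1 m, (c (k+1) - c k) • f (k+1)‖
          ≤ ∑ k ∈ Finset.Icc 1 m, (c (k+1) - c k) * ‖f (k+1)‖ := by
        refine le_trans (norm_sum_le _ _) (Finset.sum_le_sum fun k _ => ?_)
        rw [norm_smul, Real.norm_eq_abs,
          abs_of_nonneg (by linarith [hcmono k] : (0:ℝ) ≤ c (k+1) - c k)]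
      have t2 : ‖c (m+1) • f (m+2) - c 1 • f 1‖ ≤ c (m+1) * ‖f (m+2)‖ + c 1 * ‖f 1‖ := by
        refine le_trans (norm_sub_le _ _) ?_
        rw [norm_smul, norm_smul, Real.norm_eq_abs, Real.norm_eq_abs,
          abs_of_nonneg (hcnn (m+1)), abs_of_nonneg (hcnn 1)]
      calc ‖c (m+1) • f (m+2) - c 1 • f 1
            - ∑ k ∈ Finset.Icc 1 m, (c (k+1) - c k) • f (k+1)‖
          ≤ ‖c (m+1) • f (m+2) - c 1 • f 1‖
            + ‖∑ k ∈ Finset.Icc 1 m, (c (k+1) - c k) • f (k+1)‖ := norm_sub_le _ _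
        _ ≤ _ := by linarith
    rw [my_abel]
    refine le_trans tri ?_
    rw [hsplit]
    have hKK : K₃ ≤ K₃ * (((m+1:ℕ):ℝ)^(a/2) * Real.log ((m+1:ℕ):ℝ)) := by
      have hX1 : 1 ≤ ((m+1:ℕ):ℝ)^(a/2) * Real.log ((m+1:ℕ):ℝ) := by nlinarith
      nlinarith [hK₃0, hX1]
    have hexpand : K * (((m+1:ℕ):ℝ)^(a/2) * Real.log ((m+1:ℕ):ℝ))
        = 2*M/γ₀ * (((m+1:ℕ):ℝ)^(a/2) * Real.log ((m+1:ℕ):ℝ))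
          + K₂ * (((m+1:ℕ):ℝ)^(a/2) * Real.log ((m+1:ℕ):ℝ))
          + K₃ * (((m+1:ℕ):ℝ)^(a/2) * Real.log ((m+1:ℕ):ℝ))
          + 4*M/γ₀ * (((m+1:ℕ):ℝ)^(a/2) * Real.log ((m+1:ℕ):ℝ)) := by
      rw [hK]; ring
    linarith
  rw [isBigO_iff]
  refine ⟨K, ?_⟩
  have hck : ∀ k : ℕ, (γ k)⁻¹ = c k := fun k => rfl
  filter_upwards [eventually_ge_atTop (N+1)] with n hn
  have hn1 : 1 ≤ n := by omega
  have hn3 : 3 ≤ n := by omega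
  have hn1R : (1:ℝ) ≤ (n:ℝ) := by exact_mod_cast hn1
  have hn0 : (0:ℝ) < n := by linarith
  have hlogn1 : 1 ≤ Real.log n := one_le_log_nat hn3
  have hlogn0 : (0:ℝ) ≤ Real.log n := by linarith
  simp only [hck]
  have hKey := key n hn
  have hsqrt : (Real.sqrt (n:ℝ))⁻¹ = (n:ℝ)^(-(1/2 : ℝ)) := by
    rw [Real.sqrt_eq_rpow, ← Real.rpow_neg hn0.le]
  have h₁ : (0:ℝ) ≤ (Real.sqrt (n:ℝ))⁻¹ * ‖∑ k ∈ Finset.Icc 1 n, c k • (f (k+1) - f k)‖ :=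
    mul_nonneg (by positivity) (norm_nonneg _)
  have h₂ : (0:ℝ) ≤ (n:ℝ)^(-((1-a)/2)) * Real.log n :=
    mul_nonneg (Real.rpow_nonneg hn0.le _) hlogn0
  rw [Real.norm_eq_abs, Real.norm_eq_abs, abs_of_nonneg h₁, abs_of_nonneg h₂]
  calc (Real.sqrt (n:ℝ))⁻¹ * ‖∑ k ∈ Finset.Icc 1 n, c k • (f (k+1) - f k)‖
      ≤ (Real.sqrt (n:ℝ))⁻¹ * (K * ((n:ℝ)^(a/2) * Real.log n)) :=
        mul_le_mul_of_nonneg_left hKey (by positivity)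
    _ = K * (((n:ℝ)^(-(1/2:ℝ)) * (n:ℝ)^(a/2)) * Real.log n) := by rw [hsqrt]; ring
    _ = K * ((n:ℝ)^(-((1-a)/2)) * Real.log n) := by
        rw [← Real.rpow_add hn0]
        have he : -(1/2 : ℝ) + a/2 = -((1-a)/2) := by ring
        rw [he]

/-- **Abel-summation bound for the slow component**: if `‖μ_n‖ = O(√(γ_n log s_n))` a.s. with
`γ_n = γ₀ n^{-a}`, `a ∈ (1/2,1)`, then a.s.
`n^{-1/2} ‖Σ_{k≤n} γ_k⁻¹ (μ_{k+1} - μ_k)‖ = O(n^{-(1-a)/2} log n)`, and in particular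
`n^{-1/2} Σ_{k≤n} γ_k⁻¹ (μ_{k+1} - μ_k) → 0` a.s. -/
theorem abel_slow_component
    {d' : ℕ} {Ω : Type} [mΩ : MeasurableSpace Ω] (P : Measure Ω) [IsProbabilityMeasure P]
    {a γ₀ : ℝ} (ha1 : 1/2 < a) (ha2 : a < 1) (hγ₀ : 0 < γ₀)
    (γ s : ℕ → ℝ)
    (hγ : ∀ n : ℕ, γ n = γ₀ * (n : ℝ) ^ (-a))
    (hs : ∀ n, s n = ∑ k ∈ Finset.Icc 1 n, γ k)
    (μ : ℕ → Ω → EuclideanSpace ℝ (Fin d'))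
    (hμ : ∀ᵐ ω ∂P, (fun n : ℕ => ‖μ n ω‖) =O[atTop] fun n : ℕ => Real.sqrt (γ n * Real.log (s n))) :
    ∀ᵐ ω ∂P,
      ((fun n : ℕ => (Real.sqrt (n : ℝ))⁻¹ * ‖∑ k ∈ Finset.Icc 1 n, (γ k)⁻¹ • (μ (k+1) ω - μ k ω)‖)
        =O[atTop] fun n : ℕ => (n : ℝ) ^ (-((1 - a)/2)) * Real.log (n : ℝ)) ∧
      Tendsto (fun n : ℕ => (Real.sqrt (n : ℝ))⁻¹ •
          ∑ k ∈ Finset.Icc 1 n, (γ k)⁻¹ • (μ (k+1) ω - μ k ω))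
        atTop (nhds 0) := by
  filter_upwards [hμ] with ω hω
  have hO := main_det ha1 ha2 hγ₀ γ s hγ hs (fun n => μ n ω) hω
  refine ⟨hO, ?_⟩
  have hg : Tendsto (fun n : ℕ => (n:ℝ)^(-((1-a)/2)) * Real.log n) atTop (nhds 0) := by
    have h := (isLittleO_log_rpow_atTop
      (show (0:ℝ) < (1-a)/2 by linarith)).tendsto_div_nhds_zero
    have h2 := h.comp tendsto_natCast_atTop_atTop
    refine Tendsto.congr' ?_ h2
    filter_upwards [eventually_ge_atTop 1] with n hn
    have hn0 : (0:ℝ) ≤ n := Nat.cast_nonneg n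
    simp only [Function.comp_apply]
    rw [Real.rpow_neg hn0, div_eq_mul_inv, mul_comm]
  have hnorm := hO.trans_tendsto hg
  rw [tendsto_zero_iff_norm_tendsto_zero]
  refine Tendsto.congr (fun n => ?_) hnorm
  rw [norm_smul, Real.norm_eq_abs, abs_of_nonneg (inv_nonneg.2 (Real.sqrt_nonneg _))]
end

section
/- (Lemma 9, part 1: exponentially weighted sums at the fast time scale). Let b ∈ (1/2, 1], β₀ > 0, β_n = β₀ n^{-b}, u_n = Σ_{k=1}^n β_k, T > 0, (x_n) a sequence of positive real numbers, and Z_n^{(1)} = e^{-u_n T} Σ_{k=1}^n e^{u_k T} β_k x_k. Let (w_n) be a sequence satisfying Condition (C). If x_n = O(w_n), then for every T' ∈ (0, T), |Z_n^{(1)}| = O(e^{-u_n T'}·𝟙_{b=1} + w_n); and if x_n = o(w_n), then for every T' ∈ (0, T), |Z_n^{(1)}| = o(e^{-u_n T'}·𝟙_{b=1} + w_n). -/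
open MeasureTheory Filter Asymptotics Matrix

lemma exp_neg_le_one_sub_half {y : ℝ} (h0 : 0 ≤ y) (h1 : y ≤ 1) :
    Real.exp (-y) ≤ 1 - y / 2 := by
  have h2 : 1 + y ≤ Real.exp y := by simpa [add_comm] using Real.add_one_le_exp y
  have h3 : Real.exp (-y) ≤ 1 / (1 + y) := by
    rw [Real.exp_neg, ← one_div]
    exact one_div_le_one_div_of_le (by linarith) h2
  refine h3.trans ?_
  rw [div_le_iff₀ (by linarith)]
  nlinarith

lemma exp_le_one_add_two {y : ℝ} (h0 : 0 ≤ y) (h1 : y ≤ 1/2) :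
    Real.exp y ≤ 1 + 2 * y := by
  have h2 : 1 - y ≤ Real.exp (-y) := by
    simpa [sub_eq_add_neg, add_comm] using Real.add_one_le_exp (-y)
  have h3 : Real.exp y * Real.exp (-y) = 1 := by rw [← Real.exp_add]; simp
  nlinarith [Real.exp_pos y, mul_le_mul_of_nonneg_left h2 (Real.exp_pos y).le]

lemma sv_poly_bound (L : ℝ → ℝ) (hm : Monotone L) (hsv : SlowlyVarying L)
    (hpos : 0 < L 1) {δ : ℝ} (hδ : 0 < δ) :
    ∃ K : ℝ, 0 < K ∧ ∀ x : ℝ, 1 ≤ x → L x ≤ K * x ^ δ := by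
  have h2δ : (1:ℝ) < 2 ^ δ := by
    rw [Real.one_lt_rpow_iff_of_pos two_pos]; exact Or.inl ⟨one_lt_two, hδ⟩
  have h2 := hsv 2 two_pos
  have hev : ∀ᶠ x in atTop, L (2 * x) / L x < 2 ^ δ :=
    h2.eventually_lt_const h2δ
  obtain ⟨X0, hX0⟩ := eventually_atTop.1 hev
  set X := max X0 1 with hXdef
  have hX1 : (1:ℝ) ≤ X := le_max_right _ _
  have hXpos : (0:ℝ) < X := lt_of_lt_of_le one_pos hX1
  have hLpos : ∀ x : ℝ, 1 ≤ x → 0 < L x := fun x hx => lt_of_lt_of_le hpos (hm hx)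
  have hdbl : ∀ x : ℝ, X ≤ x → L (2 * x) ≤ 2 ^ δ * L x := by
    intro x hx
    have h := hX0 x (le_trans (le_max_left _ _) hx)
    have hLx : 0 < L x := hLpos x (hX1.trans hx)
    rw [div_lt_iff₀ hLx] at h
    linarith
  have hLX : 0 < L X := hLpos X hX1
  have h2δ0 : (0:ℝ) < 2 ^ δ := lt_trans one_pos h2δ
  have key : ∀ n : ℕ, ∀ x : ℝ, X ≤ x → x ≤ 2 ^ n * X →
      L x ≤ (x / X) ^ δ * (2 ^ δ * L X) := by
    intro n
    induction n with
    | zero =>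
      intro x hx1 hx2
      have hxX : (1:ℝ) ≤ x / X := (one_le_div hXpos).2 hx1
      have h1 : (1:ℝ) ≤ (x / X) ^ δ := Real.one_le_rpow hxX hδ.le
      calc L x ≤ L X := hm (by simpa using hx2)
        _ = 1 * L X := (one_mul _).symm
        _ ≤ 1 * (2 ^ δ * L X) := by nlinarith
        _ ≤ (x / X) ^ δ * (2 ^ δ * L X) := by
            apply mul_le_mul_of_nonneg_right h1 (by positivity)
    | succ n ih =>
      intro x hx1 hx2
      have hxX : (1:ℝ) ≤ x / X := (one_le_div hXpos).2 hx1
      have h1 : (1:ℝ) ≤ (x / X) ^ δ := Real.one_le_rpow hxX hδ.le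
      by_cases hc : x ≤ 2 * X
      · have : L x ≤ 2 ^ δ * L X := by
          calc L x ≤ L (2 * X) := hm hc
            _ ≤ 2 ^ δ * L X := hdbl X le_rfl
        calc L x ≤ 2 ^ δ * L X := this
          _ = 1 * (2 ^ δ * L X) := (one_mul _).symm
          _ ≤ (x / X) ^ δ * (2 ^ δ * L X) :=
              mul_le_mul_of_nonneg_right h1 (by positivity)
      · push_neg at hc
        have hx2' : x / 2 ≤ 2 ^ n * X := by
          rw [div_le_iff₀ (by norm_num : (0:ℝ) < 2)]
          calc x ≤ 2 ^ (n+1) * X := hx2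
            _ = 2 ^ n * X * 2 := by ring
        have hx1' : X ≤ x / 2 := by linarith [(by linarith : 2 * X ≤ x)]
        have ihx := ih (x / 2) hx1' hx2'
        have hstep : L x ≤ 2 ^ δ * L (x / 2) := by
          have := hdbl (x / 2) hx1'
          rwa [mul_div_cancel₀ x (by norm_num : (2:ℝ) ≠ 0)] at this
        have hhalf : (x / 2 / X) ^ δ = (x / X) ^ δ / 2 ^ δ := by
          rw [show x / 2 / X = (x / X) / 2 by ring,
            Real.div_rpow (by positivity) (by norm_num)]
        calc L x ≤ 2 ^ δ * L (x / 2) := hstep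
          _ ≤ 2 ^ δ * ((x / 2 / X) ^ δ * (2 ^ δ * L X)) := by nlinarith
          _ = (x / X) ^ δ * (2 ^ δ * L X) := by
              rw [hhalf]; field_simp
  have hXδ : (0:ℝ) < X ^ δ := Real.rpow_pos_of_pos hXpos δ
  refine ⟨2 ^ δ * L X / X ^ δ + L X, by positivity, ?_⟩
  intro x hx
  have hxδ : (0:ℝ) < x ^ δ := Real.rpow_pos_of_pos (lt_of_lt_of_le one_pos hx) δ
  have hx1δ : (1:ℝ) ≤ x ^ δ := Real.one_le_rpow hx hδ.le
  by_cases hc : x ≤ X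
  · have : L x ≤ L X := hm hc
    nlinarith [mul_pos (div_pos (mul_pos h2δ0 hLX) hXδ) hxδ]
  · push_neg at hc
    obtain ⟨n, hn⟩ := pow_unbounded_of_one_lt (x / X) (by norm_num : (1:ℝ) < 2)
    have hxn : x ≤ 2 ^ n * X := by
      rw [div_lt_iff₀ hXpos] at hn
      exact hn.le
    have := key n x hc.le hxn
    have hdiv : (x / X) ^ δ = x ^ δ / X ^ δ :=
      Real.div_rpow (by positivity) hXpos.le δ
    rw [hdiv] at this
    calc L x ≤ x ^ δ / X ^ δ * (2 ^ δ * L X) := this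
      _ = 2 ^ δ * L X / X ^ δ * x ^ δ := by ring
      _ ≤ (2 ^ δ * L X / X ^ δ + L X) * x ^ δ := by nlinarith


set_option maxHeartbeats 2000000 in
/-- **Lemma 9, part 1** (exponentially weighted sums at the fast time scale):
for `Z_n^{(1)} = e^{-u_n T} Σ_{k≤n} e^{u_k T} β_k x_k` and `(w_n)` satisfying Condition (C),
if `x_n = O(w_n)` then `|Z_n^{(1)}| = O(e^{-u_n T'} 𝟙_{b=1} + w_n)` for every `T' ∈ (0,T)`,
and similarly with `o` in place of `O`. -/
theorem weighted_sum_fast_scalar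
    {b β₀ T : ℝ} (hb1 : 1/2 < b) (hb2 : b ≤ 1) (hβ₀ : 0 < β₀) (hT : 0 < T)
    (β u : ℕ → ℝ)
    (hβ : ∀ n : ℕ, β n = β₀ * (n : ℝ) ^ (-b))
    (hu : ∀ n, u n = ∑ k ∈ Finset.Icc 1 n, β k)
    (x : ℕ → ℝ) (hx : ∀ n, 0 < x n)
    (Z : ℕ → ℝ)
    (hZ : ∀ n, Z n = Real.exp (-(u n) * T) * ∑ k ∈ Finset.Icc 1 n, Real.exp (u k * T) * β k * x k)
    (w : ℕ → ℝ) (hw : ConditionC b β w) :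
    ((x =O[atTop] w) → ∀ T' : ℝ, 0 < T' → T' < T →
      Z =O[atTop] fun n : ℕ => Real.exp (-(u n) * T') * ind1 b + w n) ∧
    ((x =o[atTop] w) → ∀ T' : ℝ, 0 < T' → T' < T →
      Z =o[atTop] fun n : ℕ => Real.exp (-(u n) * T') * ind1 b + w n) := by
  obtain ⟨hwpos, hwbdd, hwC⟩ := hw
  have hb0 : 0 < b := by linarith
  have hβnn : ∀ n : ℕ, 0 ≤ β n := by
    intro n; rw [hβ]
    exact mul_nonneg hβ₀.le (Real.rpow_nonneg (Nat.cast_nonneg n) _)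
  have hβpos : ∀ n : ℕ, 1 ≤ n → 0 < β n := by
    intro n hn; rw [hβ]
    have h1 : (0:ℝ) < (n:ℝ) := by exact_mod_cast hn
    exact mul_pos hβ₀ (Real.rpow_pos_of_pos h1 _)
  have hurec : ∀ n : ℕ, u (n+1) = u n + β (n+1) := by
    intro n; rw [hu, hu, Finset.sum_Icc_succ_top (Nat.le_add_left 1 n)]
  have hunn : ∀ n, 0 ≤ u n := by
    intro n; rw [hu]; exact Finset.sum_nonneg fun k _ => hβnn k
  have hβ2 : ∀ n : ℕ, 1 ≤ n → β n ≤ 2 * β (n+1) := by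
    intro n hn
    have hn1 : (1:ℝ) ≤ (n:ℝ) := by exact_mod_cast hn
    have hnpos : (0:ℝ) < (n:ℝ) := by linarith
    rw [hβ, hβ]
    push_cast
    have h1 : ((n:ℝ)+1) ≤ 2 * n := by linarith
    have h2 : ((2:ℝ) * n) ^ (-b) ≤ ((n:ℝ)+1) ^ (-b) :=
      Real.rpow_le_rpow_of_nonpos (by linarith) h1 (by linarith)
    have h3 : ((2:ℝ) * n) ^ (-b) = 2 ^ (-b) * (n:ℝ) ^ (-b) :=
      Real.mul_rpow (by norm_num) hnpos.le
    have h4 : (1/2 : ℝ) ≤ 2 ^ (-b) := by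
      have := Real.rpow_le_rpow_of_exponent_le (by norm_num : (1:ℝ) ≤ 2)
        (by linarith : (-1:ℝ) ≤ -b)
      rwa [Real.rpow_neg_one, show ((2:ℝ))⁻¹ = 1/2 by norm_num] at this
    have h5 : (0:ℝ) ≤ (n:ℝ) ^ (-b) := Real.rpow_nonneg hnpos.le _
    have h6 : (n:ℝ) ^ (-b) ≤ 2 * ((n:ℝ)+1) ^ (-b) := by
      nlinarith [mul_le_mul_of_nonneg_right h4 h5]
    nlinarith [mul_le_mul_of_nonneg_left h6 hβ₀.le]
  have hβto0 : Tendsto β atTop (nhds 0) := by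
    have h1 : Tendsto (fun n : ℕ => ((n:ℝ)) ^ (-b)) atTop (nhds 0) :=
      (tendsto_rpow_neg_atTop hb0).comp tendsto_natCast_atTop_atTop
    have h2 := h1.const_mul β₀
    rw [mul_zero] at h2
    exact h2.congr fun n => (hβ n).symm
  have hutop : Tendsto u atTop atTop := by
    have hterm : ∀ k : ℕ, 1 ≤ k → β₀ * ((k:ℝ))⁻¹ ≤ β k := by
      intro k hk
      have hk1 : (1:ℝ) ≤ (k:ℝ) := by exact_mod_cast hk
      rw [hβ]
      have := Real.rpow_le_rpow_of_exponent_le hk1 (by linarith : (-1:ℝ) ≤ -b)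
      rw [Real.rpow_neg_one] at this
      nlinarith
    have hsum : ∀ n : ℕ, β₀ * ∑ i ∈ Finset.range n, (1/(i+1) : ℝ) ≤ u n := by
      intro n
      rw [hu, Finset.mul_sum]
      rw [show Finset.Icc 1 n = Finset.Ico 1 (n+1) by rw [Finset.Ico_add_one_right_eq_Icc]]
      rw [Finset.sum_Ico_eq_sum_range]
      simp only [Nat.add_sub_cancel]
      apply Finset.sum_le_sum
      intro i _
      have h := hterm (1+i) (Nat.le_add_right 1 i)
      calc β₀ * (1/(i+1) : ℝ) = β₀ * (((1+i:ℕ):ℝ))⁻¹ := by push_cast; rw [one_div]; ring_nf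
        _ ≤ β (1+i) := h
    exact tendsto_atTop_mono hsum
      ((Real.tendsto_sum_range_one_div_nat_succ_atTop.const_mul_atTop hβ₀))
  have hZnn : ∀ n, 0 ≤ Z n := by
    intro n; rw [hZ]
    apply mul_nonneg (Real.exp_nonneg _)
    exact Finset.sum_nonneg fun k _ =>
      mul_nonneg (mul_nonneg (Real.exp_nonneg _) (hβnn k)) (hx k).le
  have hZrec : ∀ n : ℕ, Z (n+1) = Real.exp (-(β (n+1)) * T) * Z n + β (n+1) * x (n+1) := by
    intro n
    rw [hZ (n+1), Finset.sum_Icc_succ_top (Nat.le_add_left 1 n), hurec n, hZ n, mul_add]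
    congr 1
    · rw [← mul_assoc, ← Real.exp_add]
      congr 2
      ring
    · rw [← mul_assoc, ← mul_assoc, ← Real.exp_add]
      rw [show -(u n + β (n+1)) * T + (u n + β (n+1)) * T = 0 by ring,
        Real.exp_zero, one_mul]
  have hindnn : 0 ≤ ind1 b := by unfold ind1; split <;> norm_num
  have hBpos : ∀ (s : ℝ) (n : ℕ), 0 < Real.exp (-(u n) * s) * ind1 b + w n := by
    intro s n
    have h1 : 0 ≤ Real.exp (-(u n) * s) * ind1 b := mul_nonneg (Real.exp_nonneg _) hindnn
    linarith [hwpos n]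
  -- log bound for b = 1
  have hlog : b = 1 → ∀ n : ℕ, 1 ≤ n → u n ≤ β₀ * (1 + Real.log n) := by
    intro hbe n hn
    have hβval : ∀ m : ℕ, β m = β₀ * ((m:ℝ))⁻¹ := by
      intro m; rw [hβ, hbe, Real.rpow_neg_one]
    induction n, hn using Nat.le_induction with
    | base =>
      have h1 : u 1 = β 1 := by rw [hu]; simp
      rw [h1, hβval]
      simp
    | succ n hn ih =>
      have hnpos : (0:ℝ) < n := by exact_mod_cast hn
      have h2 : Real.log ((n:ℝ)/((n:ℝ)+1)) ≤ (n:ℝ)/((n:ℝ)+1) - 1 :=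
        Real.log_le_sub_one_of_pos (by positivity)
      rw [Real.log_div hnpos.ne' (by positivity : ((n:ℝ)+1) ≠ 0)] at h2
      have h3 : (n:ℝ)/((n:ℝ)+1) - 1 = -(((n:ℝ)+1))⁻¹ := by
        field_simp
        ring
      rw [h3] at h2
      have h1 : Real.log n + ((n:ℝ)+1)⁻¹ ≤ Real.log ((n:ℝ)+1) := by linarith
      rw [hurec n, hβval (n+1)]
      push_cast
      push_cast at ih
      nlinarith [mul_le_mul_of_nonneg_left h1 hβ₀.le]
  -- the drift inequality
  have hdrift : ∀ T' : ℝ, 0 < T' → T' < T → ∃ c : ℝ, 0 < c ∧ ∃ N₀ : ℕ, ∀ n, N₀ ≤ n →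
      Real.exp (-(β (n+1)) * T) * (Real.exp (-(u n) * T') * ind1 b + w n)
        + c * (β (n+1) * w (n+1))
      ≤ Real.exp (-(u (n+1)) * T') * ind1 b + w (n+1) := by
    intro T' hT'0 hT'T
    by_cases hbe : b = 1
    · rw [if_pos hbe] at hwC
      obtain ⟨ω, hω, L, hLmono, hLsv, hwL⟩ := hwC
      have hind1 : ind1 b = 1 := if_pos hbe
      have hβval : ∀ m : ℕ, β m = β₀ * ((m:ℝ))⁻¹ := by
        intro m; rw [hβ, hbe, Real.rpow_neg_one]
      -- one-step comparison for w, when b = 1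
      have hwstep : ∀ n : ℕ, 1 ≤ n → w n ≤ Real.exp (ω / n) * w (n+1) := by
        intro n hn
        have hn1' : (1:ℝ) ≤ (n:ℝ) := by exact_mod_cast hn
        have hnpos : (0:ℝ) < (n:ℝ) := by linarith
        have hn1pos : (0:ℝ) < (n:ℝ)+1 := by linarith
        have e1 : w n = (n:ℝ) ^ (-ω) * L n := hwL n hn
        have e2 : w (n+1) = ((n:ℝ)+1) ^ (-ω) * L ((n:ℝ)+1) := by
          have := hwL (n+1) (Nat.le_add_left 1 n)
          push_cast at this
          exact this
        have hLle : L n ≤ L ((n:ℝ)+1) := hLmono (by linarith)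
        have hL1pos : 0 < L ((n:ℝ)+1) := by
          by_contra hcon
          push_neg at hcon
          have : w (n+1) ≤ 0 := by
            rw [e2]
            exact mul_nonpos_of_nonneg_of_nonpos (Real.rpow_nonneg hn1pos.le _) hcon
          linarith [hwpos (n+1)]
        have hb1' : ((n:ℝ)+1)/n ≤ Real.exp (1/n) := by
          have h := Real.add_one_le_exp (1/(n:ℝ))
          have : ((n:ℝ)+1)/n = 1 + 1/n := by field_simp
          rw [this]; linarith
        have hr1 : (((n:ℝ)+1)/n) ^ ω ≤ Real.exp (ω / n) := by
          calc (((n:ℝ)+1)/n) ^ ω ≤ (Real.exp (1/n)) ^ ω :=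
                Real.rpow_le_rpow (by positivity) hb1' hω
            _ = Real.exp (ω / n) := by
                rw [← Real.exp_mul]; congr 1; ring
        have e3 : (((n:ℝ)+1)/n) ^ ω * ((n:ℝ)+1) ^ (-ω) = (n:ℝ) ^ (-ω) := by
          rw [Real.div_rpow hn1pos.le hnpos.le, Real.rpow_neg hn1pos.le,
            Real.rpow_neg hnpos.le]
          field_simp
        calc w n = (n:ℝ) ^ (-ω) * L n := e1
          _ ≤ (n:ℝ) ^ (-ω) * L ((n:ℝ)+1) :=
              mul_le_mul_of_nonneg_left hLle (Real.rpow_nonneg hnpos.le _)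
          _ = (((n:ℝ)+1)/n) ^ ω * ((n:ℝ)+1) ^ (-ω) * L ((n:ℝ)+1) := by rw [e3]
          _ ≤ Real.exp (ω / n) * ((n:ℝ)+1) ^ (-ω) * L ((n:ℝ)+1) := by
              apply mul_le_mul_of_nonneg_right _ hL1pos.le
              exact mul_le_mul_of_nonneg_right hr1 (Real.rpow_nonneg hn1pos.le _)
          _ = Real.exp (ω / n) * w (n+1) := by rw [e2]; ring
      by_cases hcase : ω < β₀ * T
      · -- small ω: the weight term is contracting
        have hδ : 0 < β₀ * T - ω := by linarith
        set δ := β₀ * T - ω with hδdef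
        obtain ⟨N₂, hN₂⟩ := exists_nat_ge (2*ω/δ)
        obtain ⟨N₃, hN₃⟩ := exists_nat_ge δ
        refine ⟨δ/(4*β₀), by positivity, max 1 (max N₂ N₃), ?_⟩
        intro n hn
        have hn1 : 1 ≤ n := le_trans (le_max_left _ _) hn
        have hn1' : (1:ℝ) ≤ (n:ℝ) := by exact_mod_cast hn1
        have hnpos : (0:ℝ) < (n:ℝ) := by linarith
        have hn1pos : (0:ℝ) < (n:ℝ)+1 := by linarith
        have hnN₂ : (2*ω/δ : ℝ) ≤ n := by
          refine le_trans hN₂ ?_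
          exact_mod_cast le_trans (le_max_left N₂ N₃) (le_trans (le_max_right 1 _) hn)
        have hnN₃ : (δ : ℝ) ≤ n := by
          refine le_trans hN₃ ?_
          exact_mod_cast le_trans (le_max_right N₂ N₃) (le_trans (le_max_right 1 _) hn)
        have hωn : 2*ω ≤ (n:ℝ) * δ := by
          rw [div_le_iff₀ hδ] at hnN₂; linarith
        -- the w part
        have hA : Real.exp (-(β (n+1)) * T) * w n ≤
            Real.exp (ω/(n:ℝ) - β (n+1) * T) * w (n+1) := by
          calc Real.exp (-(β (n+1)) * T) * w n
              ≤ Real.exp (-(β (n+1)) * T) * (Real.exp (ω / n) * w (n+1)) :=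
                mul_le_mul_of_nonneg_left (hwstep n hn1) (Real.exp_nonneg _)
            _ = Real.exp (ω/(n:ℝ) - β (n+1) * T) * w (n+1) := by
                rw [← mul_assoc, ← Real.exp_add]; congr 2; ring
        have hexpo : ω/(n:ℝ) - β (n+1) * T ≤ -(δ/(2*((n:ℝ)+1))) := by
          rw [hβval (n+1)]
          push_cast
          have k1 : ω/(n:ℝ) ≤ (ω + δ/2)/((n:ℝ)+1) := by
            rw [div_le_div_iff₀ hnpos hn1pos]
            nlinarith
          have k2 : β₀*((n:ℝ)+1)⁻¹*T = (β₀*T)/((n:ℝ)+1) := by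
            rw [div_eq_mul_inv]; ring
          have k3 : (ω + δ/2)/((n:ℝ)+1) - (β₀*T)/((n:ℝ)+1) = -(δ/(2*((n:ℝ)+1))) := by
            rw [div_sub_div_same, show ω + δ/2 - β₀*T = -(δ/2) by rw [hδdef]; ring,
              neg_div, div_div]
          rw [k2]
          linarith
        have hBexp : Real.exp (ω/(n:ℝ) - β (n+1) * T) ≤ 1 - δ/(4*((n:ℝ)+1)) := by
          have l1 : Real.exp (ω/(n:ℝ) - β (n+1)*T) ≤ Real.exp (-(δ/(2*((n:ℝ)+1)))) :=
            Real.exp_le_exp.2 hexpo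
          have l2 : δ/(2*((n:ℝ)+1)) ≤ 1 := by
            rw [div_le_one (by positivity)]
            linarith
          have l3 := exp_neg_le_one_sub_half (by positivity) l2
          have l4 : δ/(2*((n:ℝ)+1))/2 = δ/(4*((n:ℝ)+1)) := by
            rw [div_div]; congr 1; ring
          rw [l4] at l3
          linarith
        have hcterm : (δ/(4*β₀)) * (β (n+1) * w (n+1)) = δ/(4*((n:ℝ)+1)) * w (n+1) := by
          rw [hβval (n+1)]
          push_cast
          field_simp
        have hexp2 : Real.exp (-(β (n+1)) * T) * (Real.exp (-(u n) * T') * ind1 b)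
            ≤ Real.exp (-(u (n+1)) * T') * ind1 b := by
          rw [hind1, mul_one, mul_one, ← Real.exp_add]
          apply Real.exp_le_exp.2
          rw [hurec n]
          nlinarith [mul_nonneg (hβnn (n+1)) (le_of_lt (sub_pos.2 hT'T))]
        have hA2 : Real.exp (-(β (n+1)) * T) * w n ≤ (1 - δ/(4*((n:ℝ)+1))) * w (n+1) :=
          le_trans hA (mul_le_mul_of_nonneg_right hBexp (hwpos (n+1)).le)
        rw [mul_add]
        linarith [hexp2, hA2, hcterm]
      · -- large ω: use the exponential slack
        push_neg at hcase
        have hωpos : 0 < ω := lt_of_lt_of_le (mul_pos hβ₀ hT) hcase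
        have hTT' : 0 < T - T' := by linarith
        have hδ' : 0 < ω - β₀*T' := by nlinarith
        set δ2 := (ω - β₀*T')/2 with hδ2def
        have hδ2 : 0 < δ2 := by rw [hδ2def]; positivity
        have hL1 : 0 < L 1 := by
          have h := hwL 1 le_rfl
          rw [Nat.cast_one, Real.one_rpow, one_mul] at h
          rw [← h]; exact hwpos 1
        obtain ⟨K, hK, hKb⟩ := sv_poly_bound L hLmono hLsv hL1 hδ2
        set K₀ := (T - T')*β₀/(2*(4*ω + β₀)) with hK₀def
        have hK₀ : 0 < K₀ := by rw [hK₀def]; positivity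
        have hwb : ∀ᶠ m : ℕ in atTop, w m ≤ K₀ * Real.exp (-(u m) * T') := by
          have ht : Tendsto (fun m : ℕ => ((m:ℝ)) ^ (-δ2)) atTop (nhds 0) :=
            (tendsto_rpow_neg_atTop hδ2).comp tendsto_natCast_atTop_atTop
          have hconst : 0 < K₀ * Real.exp (-(β₀*T')) / K := by positivity
          filter_upwards [ht.eventually_lt_const hconst, eventually_ge_atTop 1] with m h1 hm1
          have hm1' : (1:ℝ) ≤ (m:ℝ) := by exact_mod_cast hm1
          have hmpos : (0:ℝ) < (m:ℝ) := by linarith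
          have e1 : w m = (m:ℝ) ^ (-ω) * L m := hwL m hm1
          have e2 : L m ≤ K * (m:ℝ) ^ δ2 := hKb m hm1'
          have e3 : w m ≤ K * ((m:ℝ) ^ (-ω) * (m:ℝ) ^ δ2) := by
            calc w m = (m:ℝ) ^ (-ω) * L m := e1
              _ ≤ (m:ℝ) ^ (-ω) * (K * (m:ℝ) ^ δ2) :=
                  mul_le_mul_of_nonneg_left e2 (Real.rpow_nonneg hmpos.le _)
              _ = K * ((m:ℝ) ^ (-ω) * (m:ℝ) ^ δ2) := by ring
          have e4 : (m:ℝ) ^ (-ω) * (m:ℝ) ^ δ2 = (m:ℝ) ^ (-(β₀*T')) * (m:ℝ) ^ (-δ2) := by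
            rw [← Real.rpow_add hmpos, ← Real.rpow_add hmpos]
            congr 1
            rw [hδ2def]; ring
          have e5 : Real.exp (-(β₀*T')) * (m:ℝ) ^ (-(β₀*T')) ≤ Real.exp (-(u m) * T') := by
            have hub := hlog hbe m hm1
            rw [Real.rpow_def_of_pos hmpos, ← Real.exp_add]
            apply Real.exp_le_exp.2
            nlinarith [hub]
          have hrnn : (0:ℝ) ≤ (m:ℝ) ^ (-(β₀*T')) := Real.rpow_nonneg hmpos.le _
          calc w m ≤ K * ((m:ℝ) ^ (-(β₀*T')) * (m:ℝ) ^ (-δ2)) := by rw [← e4]; exact e3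
            _ ≤ K * ((m:ℝ) ^ (-(β₀*T')) * (K₀ * Real.exp (-(β₀*T'))/K)) := by
                apply mul_le_mul_of_nonneg_left _ hK.le
                exact mul_le_mul_of_nonneg_left h1.le hrnn
            _ = K₀ * (Real.exp (-(β₀*T')) * (m:ℝ) ^ (-(β₀*T'))) := by
                field_simp
            _ ≤ K₀ * Real.exp (-(u m) * T') := mul_le_mul_of_nonneg_left e5 hK₀.le
        obtain ⟨N₄, hN₄⟩ := eventually_atTop.1 hwb
        obtain ⟨N₅, hN₅⟩ := exists_nat_ge (2*ω)
        obtain ⟨N₆, hN₆⟩ := exists_nat_ge (β₀*(T-T'))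
        refine ⟨1, one_pos, max (max 1 N₄) (max N₅ N₆), ?_⟩
        intro n hn
        have hn1 : 1 ≤ n := le_trans (le_max_left 1 N₄) (le_trans (le_max_left _ _) hn)
        have hn1' : (1:ℝ) ≤ (n:ℝ) := by exact_mod_cast hn1
        have hnpos : (0:ℝ) < (n:ℝ) := by linarith
        have hn1pos : (0:ℝ) < (n:ℝ)+1 := by linarith
        have hnN₄ : N₄ ≤ n + 1 :=
          le_trans (le_trans (le_max_right 1 N₄) (le_trans (le_max_left _ _) hn)) (Nat.le_succ n)
        have hnN₅ : (2*ω : ℝ) ≤ n := by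
          refine le_trans hN₅ ?_
          exact_mod_cast le_trans (le_max_left N₅ N₆) (le_trans (le_max_right _ _) hn)
        have hnN₆ : (β₀*(T-T') : ℝ) ≤ n := by
          refine le_trans hN₆ ?_
          exact_mod_cast le_trans (le_max_right N₅ N₆) (le_trans (le_max_right _ _) hn)
        have hβv : β (n+1) = β₀ * ((n:ℝ)+1)⁻¹ := by
          rw [hβval (n+1)]; push_cast; ring
        have hy : β (n+1) * (T - T') = β₀*(T-T')/((n:ℝ)+1) := by
          rw [hβv, div_eq_mul_inv]; ring
        have hy1 : β (n+1) * (T - T') ≤ 1 := by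
          rw [hy, div_le_one hn1pos]
          linarith
        have hy0 : 0 ≤ β (n+1) * (T - T') := mul_nonneg (hβnn (n+1)) hTT'.le
        -- exponential part with slack
        have hexp1 : Real.exp (-(β (n+1)) * T) * Real.exp (-(u n) * T') =
            Real.exp (-(u (n+1)) * T') * Real.exp (-(β (n+1) * (T - T'))) := by
          rw [← Real.exp_add, ← Real.exp_add, hurec n]; congr 1; ring
        have q1 : Real.exp (-(β (n+1)) * T) * (Real.exp (-(u n) * T') * ind1 b)
            ≤ Real.exp (-(u (n+1)) * T') * ind1 b
              - (β₀*(T-T')/(2*((n:ℝ)+1))) * Real.exp (-(u (n+1)) * T') := by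
          rw [hind1, mul_one, mul_one, hexp1]
          have l1 : Real.exp (-(β (n+1) * (T - T'))) ≤ 1 - β (n+1) * (T - T')/2 :=
            exp_neg_le_one_sub_half hy0 hy1
          have l2 : β (n+1) * (T - T')/2 = β₀*(T-T')/(2*((n:ℝ)+1)) := by
            rw [hy, div_div]; congr 1; ring
          rw [← l2]
          nlinarith [Real.exp_pos (-(u (n+1)) * T'),
            mul_le_mul_of_nonneg_left l1 (Real.exp_pos (-(u (n+1)) * T')).le]
        -- weight part
        have q2 : Real.exp (-(β (n+1)) * T) * w n ≤ w (n+1) + (4*ω/((n:ℝ)+1)) * w (n+1) := by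
          have l1 : Real.exp (-(β (n+1)) * T) ≤ 1 :=
            Real.exp_le_one_iff.2 (by nlinarith [hβnn (n+1)])
          have l2 : Real.exp (ω/(n:ℝ)) ≤ 1 + 2*(ω/(n:ℝ)) := by
            apply exp_le_one_add_two (by positivity)
            rw [div_le_iff₀ hnpos]
            linarith
          have l3 : 1 + 2*(ω/(n:ℝ)) ≤ 1 + 4*ω/((n:ℝ)+1) := by
            have l3' : (2*ω)/(n:ℝ) ≤ (4*ω)/((n:ℝ)+1) := by
              rw [div_le_div_iff₀ hnpos hn1pos]
              nlinarith
            have e : 2*(ω/(n:ℝ)) = (2*ω)/(n:ℝ) := by ring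
            linarith
          have l4 : w n ≤ (1 + 4*ω/((n:ℝ)+1)) * w (n+1) := by
            calc w n ≤ Real.exp (ω/(n:ℝ)) * w (n+1) := hwstep n hn1
              _ ≤ (1 + 4*ω/((n:ℝ)+1)) * w (n+1) :=
                  mul_le_mul_of_nonneg_right (le_trans l2 l3) (hwpos (n+1)).le
          calc Real.exp (-(β (n+1)) * T) * w n ≤ 1 * w n := by
                apply mul_le_mul_of_nonneg_right l1 ?_
                linarith [hwpos n]
            _ = w n := one_mul _
            _ ≤ (1 + 4*ω/((n:ℝ)+1)) * w (n+1) := l4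
            _ = w (n+1) + (4*ω/((n:ℝ)+1)) * w (n+1) := by ring
        have q3 : (1:ℝ) * (β (n+1) * w (n+1)) = (β₀/((n:ℝ)+1)) * w (n+1) := by
          rw [hβv, div_eq_mul_inv]; ring
        have q4 : (4*ω/((n:ℝ)+1)) * w (n+1) + (β₀/((n:ℝ)+1)) * w (n+1)
            ≤ (β₀*(T-T')/(2*((n:ℝ)+1))) * Real.exp (-(u (n+1)) * T') := by
          have l1 := hN₄ (n+1) hnN₄
          have l2 : (4*ω/((n:ℝ)+1)) * w (n+1) + (β₀/((n:ℝ)+1)) * w (n+1)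
              = ((4*ω + β₀)/((n:ℝ)+1)) * w (n+1) := by ring
          have l3 : (0:ℝ) < (4*ω + β₀)/((n:ℝ)+1) := by positivity
          have l4 : ((4*ω + β₀)/((n:ℝ)+1)) * w (n+1)
              ≤ ((4*ω + β₀)/((n:ℝ)+1)) * (K₀ * Real.exp (-(u (n+1)) * T')) :=
            mul_le_mul_of_nonneg_left l1 l3.le
          have l5 : ((4*ω + β₀)/((n:ℝ)+1)) * K₀ = β₀*(T-T')/(2*((n:ℝ)+1)) := by
            rw [hK₀def]
            have h4ω : (4*ω + β₀) ≠ 0 := by positivity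
            field_simp
          rw [l2]
          calc ((4*ω + β₀)/((n:ℝ)+1)) * w (n+1)
              ≤ ((4*ω + β₀)/((n:ℝ)+1)) * (K₀ * Real.exp (-(u (n+1)) * T')) := l4
            _ = (((4*ω + β₀)/((n:ℝ)+1)) * K₀) * Real.exp (-(u (n+1)) * T') := by ring
            _ = (β₀*(T-T')/(2*((n:ℝ)+1))) * Real.exp (-(u (n+1)) * T') := by rw [l5]
        rw [mul_add, one_mul] at *
        rw [q3] at *
        linarith [q1, q2, q4]
    · -- b < 1
      rw [if_neg hbe] at hwC
      have hind0 : ind1 b = 0 := if_neg hbe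
      obtain ⟨N₁, hN₁⟩ := eventually_atTop.1 (isLittleO_iff.1 hwC
        (show (0:ℝ) < T/4 by positivity))
      obtain ⟨N₂, hN₂⟩ := eventually_atTop.1
        (hβto0.eventually_lt_const (by positivity : (0:ℝ) < 2/T))
      refine ⟨T/4, by positivity, max (max N₁ N₂) 1, ?_⟩
      intro n hn
      have hn1 : 1 ≤ n := le_trans (le_max_right _ 1) hn
      have hnN₁ : N₁ ≤ n := le_trans (le_trans (le_max_left N₁ N₂) (le_max_left _ 1)) hn
      have hnN₂ : N₂ ≤ n + 1 :=
        le_trans (le_trans (le_trans (le_max_right N₁ N₂) (le_max_left _ 1)) hn) (Nat.le_succ n)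
      have h1 := hN₁ n hnN₁
      rw [Real.norm_eq_abs, Real.norm_eq_abs, abs_of_nonneg (hβnn n)] at h1
      have h2 : w n / w (n+1) ≤ 1 + (T/4) * β n := by
        have := (abs_le.1 h1).2; linarith
      have h3 : w n ≤ (1 + (T/4) * β n) * w (n+1) := by
        rw [div_le_iff₀ (hwpos (n+1))] at h2; linarith
      have h4 : (T/4) * β n ≤ (T/2) * β (n+1) := by
        have := hβ2 n hn1; nlinarith
      have h5 : 1 + (T/2) * β (n+1) ≤ Real.exp ((T/2) * β (n+1)) := by
        have := Real.add_one_le_exp ((T/2) * β (n+1)); linarith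
      have h6 : w n ≤ Real.exp ((T/2) * β (n+1)) * w (n+1) := by
        nlinarith [hwpos (n+1), hβnn n]
      have h7 : Real.exp (-(β (n+1)) * T) * w n ≤
          Real.exp (-((T/2) * β (n+1))) * w (n+1) := by
        calc Real.exp (-(β (n+1)) * T) * w n
            ≤ Real.exp (-(β (n+1)) * T) * (Real.exp ((T/2) * β (n+1)) * w (n+1)) :=
              mul_le_mul_of_nonneg_left h6 (Real.exp_nonneg _)
          _ = Real.exp (-((T/2) * β (n+1))) * w (n+1) := by
              rw [← mul_assoc, ← Real.exp_add]; congr 2; ring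
      have h8 : Real.exp (-((T/2) * β (n+1))) ≤ 1 - (T/4) * β (n+1) := by
        have hle := hN₂ (n+1) hnN₂
        have hy1 : (T/2) * β (n+1) ≤ 1 := by
          have e : T * (2/T) = 2 := by field_simp
          nlinarith [mul_lt_mul_of_pos_left hle hT, hβnn (n+1)]
        have := exp_neg_le_one_sub_half
          (mul_nonneg (by positivity) (hβnn (n+1))) hy1
        calc Real.exp (-((T/2) * β (n+1))) ≤ 1 - (T/2) * β (n+1) / 2 := this
          _ = 1 - (T/4) * β (n+1) := by ring
      simp only [hind0, mul_zero, zero_add]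
      have h9 : Real.exp (-(β (n+1)) * T) * w n ≤ (1 - (T/4) * β (n+1)) * w (n+1) :=
        le_trans h7 (mul_le_mul_of_nonneg_right h8 (hwpos (n+1)).le)
      nlinarith [h9, hwpos (n+1), hβnn (n+1)]
  -- the induction engine
  have engine : ∀ (T' c : ℝ) (N₀ : ℕ), 0 < c →
      (∀ n, N₀ ≤ n →
        Real.exp (-(β (n+1)) * T) * (Real.exp (-(u n) * T') * ind1 b + w n)
          + c * (β (n+1) * w (n+1))
        ≤ Real.exp (-(u (n+1)) * T') * ind1 b + w (n+1)) →
      ∀ C : ℝ, 0 ≤ C → ∀ N, N₀ ≤ N → ∀ V : ℕ → ℝ,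
      V N ≤ C * (Real.exp (-(u N) * T') * ind1 b + w N) →
      (∀ n, N ≤ n → V (n+1) = Real.exp (-(β (n+1)) * T) * V n + β (n+1) * x (n+1)) →
      (∀ n, N ≤ n → x (n+1) ≤ c * C * w (n+1)) →
      ∀ n, N ≤ n → V n ≤ C * (Real.exp (-(u n) * T') * ind1 b + w n) := by
    intro T' c N₀ hc hdr C hC N hN V hbase hrec hxb
    intro n hn
    induction n, hn using Nat.le_induction with
    | base => exact hbase
    | succ n hn ih =>
      have h1 := hdr n (le_trans hN hn)
      have hx1 := hxb n hn
      have he : (0:ℝ) < Real.exp (-(β (n+1)) * T) := Real.exp_pos _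
      have hb' := hβnn (n+1)
      rw [hrec n hn]
      nlinarith [mul_le_mul_of_nonneg_left ih he.le, mul_le_mul_of_nonneg_left h1 hC,
        mul_le_mul_of_nonneg_left hx1 hb']
  -- the exponential term is negligible
  have hEB : ∀ T' : ℝ, 0 < T' → T' < T → ∀ η : ℝ, 0 < η →
      ∀ᶠ n in atTop, Real.exp (-(u n) * T) ≤
        η * (Real.exp (-(u n) * T') * ind1 b + w n) := by
    intro T' hT'0 hT'T η hη
    by_cases hbe : b = 1
    · have hind1 : ind1 b = 1 := if_pos hbe
      have h1 : Tendsto (fun n => Real.exp (-((T - T') * u n))) atTop (nhds 0) := by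
        apply Real.tendsto_exp_atBot.comp
        exact (tendsto_neg_atTop_atBot).comp
          (hutop.const_mul_atTop (by linarith : (0:ℝ) < T - T'))
      filter_upwards [h1.eventually_lt_const hη] with n hn
      have h2 : Real.exp (-(u n) * T) =
          Real.exp (-(u n) * T') * Real.exp (-((T - T') * u n)) := by
        rw [← Real.exp_add]; congr 1; ring
      rw [h2, hind1]
      nlinarith [Real.exp_pos (-(u n) * T'), hwpos n, Real.exp_nonneg (-((T - T') * u n))]
    · have hind0 : ind1 b = 0 := if_neg hbe
      rw [if_neg hbe] at hwC
      obtain ⟨N₁, hN₁⟩ := eventually_atTop.1 (isLittleO_iff.1 hwC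
        (show (0:ℝ) < T/4 by positivity))
      set M := max N₁ 1 with hM
      have hwlow : ∀ n, M ≤ n → w M * Real.exp (-(T/2) * u n) ≤ w n := by
        intro n hn
        induction n, hn using Nat.le_induction with
        | base =>
          have h1 : Real.exp (-(T/2) * u M) ≤ 1 :=
            Real.exp_le_one_iff.2 (by nlinarith [hunn M])
          nlinarith [hwpos M, Real.exp_nonneg (-(T/2) * u M)]
        | succ n hn ih =>
          have hn1 : 1 ≤ n := le_trans (le_max_right N₁ 1) hn
          have h1 := hN₁ n (le_trans (le_max_left N₁ 1) hn)
          rw [Real.norm_eq_abs, Real.norm_eq_abs, abs_of_nonneg (hβnn n)] at h1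
          have h2 : w n / w (n+1) ≤ 1 + (T/4) * β n := by
            have := (abs_le.1 h1).2; linarith
          have h3 : w n ≤ (1 + (T/4) * β n) * w (n+1) := by
            rw [div_le_iff₀ (hwpos (n+1))] at h2; linarith
          have h4 : (T/4) * β n ≤ (T/2) * β (n+1) := by
            have := hβ2 n hn1; nlinarith
          have h5 : 1 + (T/2) * β (n+1) ≤ Real.exp ((T/2) * β (n+1)) := by
            have := Real.add_one_le_exp ((T/2) * β (n+1)); linarith
          have h6 : w n ≤ Real.exp ((T/2) * β (n+1)) * w (n+1) := by
            nlinarith [hwpos (n+1), hβnn n]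
          have hEE : Real.exp ((T/2) * β (n+1)) * Real.exp (-((T/2) * β (n+1))) = 1 := by
            rw [← Real.exp_add]; simp
          have h7 : w n * Real.exp (-((T/2) * β (n+1))) ≤ w (n+1) := by
            rw [Real.exp_neg, mul_inv_le_iff₀ (Real.exp_pos _)]
            rw [mul_comm] at h6
            linarith
          have h8 : Real.exp (-(T/2) * u n) * Real.exp (-((T/2) * β (n+1))) =
              Real.exp (-(T/2) * u (n+1)) := by
            rw [← Real.exp_add, hurec n]; congr 1; ring
          calc w M * Real.exp (-(T/2) * u (n+1))
              = (w M * Real.exp (-(T/2) * u n)) * Real.exp (-((T/2) * β (n+1))) := by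
                rw [mul_assoc, h8]
            _ ≤ w n * Real.exp (-((T/2) * β (n+1))) :=
                mul_le_mul_of_nonneg_right ih (Real.exp_nonneg _)
            _ ≤ w (n+1) := h7
      have h1 : Tendsto (fun n => Real.exp (-(T/2) * u n)) atTop (nhds 0) := by
        apply Real.tendsto_exp_atBot.comp
        have : Tendsto (fun n => (T/2) * u n) atTop atTop :=
          hutop.const_mul_atTop (by positivity : (0:ℝ) < T/2)
        exact ((tendsto_neg_atTop_atBot).comp this).congr
          (fun n => by simp [Function.comp]; try ring)
      have h2 : ∀ᶠ n in atTop, Real.exp (-(T/2) * u n) < η * w M :=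
        h1.eventually_lt_const (mul_pos hη (hwpos M))
      filter_upwards [h2, eventually_ge_atTop M] with n hn hnM
      have h3 : Real.exp (-(u n) * T) =
          Real.exp (-(T/2) * u n) * Real.exp (-(T/2) * u n) := by
        rw [← Real.exp_add]; congr 1; ring
      rw [hind0]
      have h4 := hwlow n hnM
      calc Real.exp (-(u n) * T)
          = Real.exp (-(T/2) * u n) * Real.exp (-(T/2) * u n) := h3
        _ ≤ (η * w M) * Real.exp (-(T/2) * u n) :=
            mul_le_mul_of_nonneg_right hn.le (Real.exp_nonneg _)
        _ = η * (w M * Real.exp (-(T/2) * u n)) := by ring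
        _ ≤ η * w n := mul_le_mul_of_nonneg_left h4 hη.le
        _ = η * (Real.exp (-(u n) * T') * 0 + w n) := by ring
  constructor
  · -- big-O part
    intro hO T' hT'0 hT'T
    obtain ⟨c, hc, N₀, hdr⟩ := hdrift T' hT'0 hT'T
    rw [isBigO_iff] at hO
    obtain ⟨C₁, hC₁⟩ := hO
    obtain ⟨N₁, hN₁⟩ := eventually_atTop.1 hC₁
    have hxw : ∀ n, N₁ ≤ n → x n ≤ C₁ * w n := by
      intro n hn
      have := hN₁ n hn
      rwa [Real.norm_eq_abs, Real.norm_eq_abs, abs_of_pos (hx n), abs_of_pos (hwpos n)] at this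
    have hC₁pos : 0 < C₁ := by
      have h := hxw N₁ le_rfl
      nlinarith [hx N₁, hwpos N₁]
    set N := max N₀ N₁ with hNdef
    set C := max (C₁/c) (Z N / (Real.exp (-(u N) * T') * ind1 b + w N)) with hCdef
    have hC0 : 0 ≤ C := le_trans (div_nonneg hC₁pos.le hc.le) (le_max_left _ _)
    have hbase : Z N ≤ C * (Real.exp (-(u N) * T') * ind1 b + w N) := by
      rw [← div_le_iff₀ (hBpos T' N)]
      exact le_max_right _ _
    have hmain := engine T' c N₀ hc hdr C hC0 N (le_max_left _ _) Z hbase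
      (fun n _ => hZrec n)
      (fun n hn => by
        have h1 := hxw (n+1) (le_trans (le_max_right N₀ N₁) (le_trans hn (Nat.le_succ n)))
        have h2 : C₁ ≤ c * C := by
          rw [← div_le_iff₀' hc]
          exact le_max_left _ _
        nlinarith [hwpos (n+1)])
    rw [isBigO_iff]
    refine ⟨C, ?_⟩
    filter_upwards [eventually_ge_atTop N] with n hn
    rw [Real.norm_eq_abs, Real.norm_eq_abs, abs_of_nonneg (hZnn n),
      abs_of_pos (hBpos T' n)]
    exact hmain n hn
  · -- little-o part
    intro ho T' hT'0 hT'T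
    obtain ⟨c, hc, N₀, hdr⟩ := hdrift T' hT'0 hT'T
    rw [isLittleO_iff]
    intro ε hε
    rw [isLittleO_iff] at ho
    have hε2 : (0:ℝ) < c * (ε/2) := by positivity
    obtain ⟨N₂, hN₂⟩ := eventually_atTop.1 (ho hε2)
    set N := max N₀ N₂ with hNdef
    set K := Real.exp (u N * T) * Z N with hKdef
    have hK0 : 0 ≤ K := mul_nonneg (Real.exp_nonneg _) (hZnn N)
    set V : ℕ → ℝ := fun n => Z n - Real.exp (-(u n) * T) * K with hVdef
    have hbase : V N ≤ (ε/2) * (Real.exp (-(u N) * T') * ind1 b + w N) := by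
      have : V N = 0 := by
        simp only [hVdef, hKdef]
        rw [← mul_assoc, ← Real.exp_add]
        rw [show -(u N) * T + u N * T = 0 by ring, Real.exp_zero, one_mul]
        ring
      rw [this]
      exact mul_nonneg (by positivity) (hBpos T' N).le
    have hrecV : ∀ n, N ≤ n → V (n+1) = Real.exp (-(β (n+1)) * T) * V n + β (n+1) * x (n+1) := by
      intro n _
      simp only [hVdef]
      rw [hZrec n]
      have : Real.exp (-(u (n+1)) * T) = Real.exp (-(β (n+1)) * T) * Real.exp (-(u n) * T) := by
        rw [← Real.exp_add, hurec n]
        congr 1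
        ring
      rw [this]
      ring
    have hxb : ∀ n, N ≤ n → x (n+1) ≤ c * (ε/2) * w (n+1) := by
      intro n hn
      have h1 := hN₂ (n+1) (le_trans (le_max_right N₀ N₂) (le_trans hn (Nat.le_succ n)))
      rwa [Real.norm_eq_abs, Real.norm_eq_abs, abs_of_pos (hx (n+1)),
        abs_of_pos (hwpos (n+1))] at h1
    have hmain := engine T' c N₀ hc hdr (ε/2) (by positivity) N (le_max_left _ _) V hbase hrecV hxb
    have hEB' := hEB T' hT'0 hT'T (ε/(2*(K+1))) (by positivity)
    filter_upwards [eventually_ge_atTop N, hEB'] with n hn hEBn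
    rw [Real.norm_eq_abs, Real.norm_eq_abs, abs_of_nonneg (hZnn n),
      abs_of_pos (hBpos T' n)]
    have h1 := hmain n hn
    have h2 : Z n = V n + Real.exp (-(u n) * T) * K := by simp [hVdef]
    have h3 : Real.exp (-(u n) * T) * K ≤ (ε/2) * (Real.exp (-(u n) * T') * ind1 b + w n) := by
      have hB := hBpos T' n
      calc Real.exp (-(u n) * T) * K
          ≤ (ε/(2*(K+1)) * (Real.exp (-(u n) * T') * ind1 b + w n)) * K := by
            apply mul_le_mul_of_nonneg_right hEBn hK0
        _ ≤ (ε/2) * (Real.exp (-(u n) * T') * ind1 b + w n) := by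
            rw [div_mul_eq_mul_div, div_mul_eq_mul_div, div_le_iff₀ (by positivity)]
            nlinarith
      
    linarith [h1, h3, h2.le]
end
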